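/- arXiv:2206.11198 — 7 statements merged into one kernel-verified Lean document; each statement's English description precedes it below -/
import Mathlib

section
/- For every t ≥ 0, one has E[p_{t+1}(1 − p_{t+1}) | ℱ_t] = (1 − s) · p_t (1 − p_t) almost surely. -/
open MeasureTheory ProbabilityTheory Finset

lemma my_int_of_bound {Ω : Type*} [MeasurableSpace Ω] {μ : Measure Ω} [IsFiniteMeasure μ]
    {f : Ω → ℝ} (hf : AEStronglyMeasurable f μ) (C : ℝ) (h : ∀ᵐ ω ∂μ, |f ω| ≤ C) :
    Integrable f μ :=
  Integrable.mono' (integrable_const C) hf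
    (by filter_upwards [h] with ω hω; simpa [Real.norm_eq_abs] using hω)

lemma my_key_sum (s : Finset ℕ) (γ : ℕ → ℝ) (a b : ℝ) :
    ∑ pr ∈ s ×ˢ s, γ pr.1 * γ pr.2 * (if pr.1 = pr.2 then a else b)
      = (∑ i ∈ s, γ i) ^ 2 * b + (∑ i ∈ s, γ i ^ 2) * (a - b) := by
  classical
  have expand : ∀ pr : ℕ × ℕ, pr ∈ s ×ˢ s →
      γ pr.1 * γ pr.2 * (if pr.1 = pr.2 then a else b)
      = γ pr.1 * γ pr.2 * b + (if pr.1 = pr.2 then γ pr.1 * γ pr.2 * (a - b) else 0) := by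
    intro pr _; split <;> ring
  rw [Finset.sum_congr rfl expand, Finset.sum_add_distrib]
  congr 1
  · rw [← Finset.sum_mul]
    congr 1
    rw [sq, Finset.sum_mul_sum, Finset.sum_product]
  · rw [Finset.sum_product, Finset.sum_mul]
    refine Finset.sum_congr rfl fun i hi => ?_
    rw [Finset.sum_ite_eq s i (fun j => γ i * γ j * (a - b)), if_pos hi, sq]

lemma my_eventuallyEq_sum {ι Ω : Type*} [MeasurableSpace Ω] {μ : Measure Ω}
    (s : Finset ι) (f g : ι → Ω → ℝ) (h : ∀ i ∈ s, f i =ᵐ[μ] g i) :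
    (∑ i ∈ s, f i) =ᵐ[μ] (∑ i ∈ s, g i) := by
  classical
  induction s using Finset.induction_on with
  | empty => simp
  | @insert a s ha ih =>
    rw [Finset.sum_insert ha, Finset.sum_insert ha]
    exact (h a (Finset.mem_insert_self a s)).add
      (ih fun i hi => h i (Finset.mem_insert_of_mem hi))


/-- The neutral-bit frequency process of the general univariate EDA with sample
size `lam` and update weights `γ 0, γ 1, …, γ lam`.  Conditionally on `F t`, the
samples `x t 1, …, x t lam` are i.i.d. Bernoulli with parameter `p t` (encoded
via all conditional mixed moments), and
`p (t+1) = γ 0 * p t + ∑ i ∈ [1..lam], γ i * x t i`. -/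
structure NeutralBitEDA {Ω : Type*} [MeasurableSpace Ω] (μ : Measure Ω)
    (lam : ℕ) (γ : ℕ → ℝ) where
  F : Filtration ℕ (inferInstance : MeasurableSpace Ω)
  p : ℕ → Ω → ℝ
  x : ℕ → ℕ → Ω → ℝ
  adapted : Adapted F p
  integrable : ∀ t, Integrable (p t) μ
  meas_x : ∀ t i, i ∈ Finset.Icc 1 lam → StronglyMeasurable[F (t + 1)] (x t i)
  p_zero : ∀ᵐ ω ∂μ, p 0 ω = 1 / 2
  p_range : ∀ t, ∀ᵐ ω ∂μ, p t ω ∈ Set.Icc (0 : ℝ) 1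
  x_binary : ∀ t i, i ∈ Finset.Icc 1 lam → ∀ᵐ ω ∂μ, x t i ω = 0 ∨ x t i ω = 1
  cond_iid : ∀ t, ∀ S : Finset ℕ, S ⊆ Finset.Icc 1 lam →
    μ[fun ω => ∏ i ∈ S, x t i ω | F t] =ᵐ[μ] fun ω => p t ω ^ S.card
  update : ∀ t, ∀ᵐ ω ∂μ,
    p (t + 1) ω = γ 0 * p t ω + ∑ i ∈ Finset.Icc 1 lam, γ i * x t i ω

/-- For every `t ≥ 0`, one has
`E[p (t+1) * (1 - p (t+1)) | F t] = (1 - s) * p t * (1 - p t)` almost surely,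
where `s = ∑_{i=1}^lam γ i ^ 2`. -/
theorem neutral_bit_condexp_variance_potential {Ω : Type*} [MeasurableSpace Ω]
    (μ : Measure Ω) [IsProbabilityMeasure μ]
    (lam : ℕ) (hlam : 1 ≤ lam) (γ : ℕ → ℝ)
    (hsum : ∑ i ∈ Finset.range (lam + 1), γ i = 1)
    (hnz : ∃ i ∈ Finset.Icc 1 lam, γ i ≠ 0)
    (E : NeutralBitEDA μ lam γ) (t : ℕ) :
    μ[fun ω => E.p (t + 1) ω * (1 - E.p (t + 1) ω) | E.F t]
      =ᵐ[μ] fun ω =>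
        (1 - ∑ i ∈ Finset.Icc 1 lam, γ i ^ 2) * (E.p t ω * (1 - E.p t ω)) := by
  classical
  have hm_le : E.F t ≤ (inferInstance : MeasurableSpace Ω) := E.F.le t
  haveI hσ : SigmaFinite (μ.trim hm_le) := by infer_instance
  have habs : ∀ a b : ℝ, |a - b| ≤ |a| + |b| := by
    intro a b
    rw [sub_eq_add_neg]
    exact (abs_add_le _ _).trans (by rw [abs_neg])
  -- basic facts about p t
  have hq_sm : StronglyMeasurable[E.F t] (E.p t) := (E.adapted t).stronglyMeasurable
  have hq_asm : AEStronglyMeasurable (E.p t) μ := (hq_sm.mono hm_le).aestronglyMeasurable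
  have hq_bd : ∀ᵐ ω ∂μ, |E.p t ω| ≤ 1 := by
    filter_upwards [E.p_range t] with ω h
    rw [abs_le]; exact ⟨by linarith [h.1], h.2⟩
  -- basic facts about x t i
  have hx_asm : ∀ i ∈ Finset.Icc 1 lam, AEStronglyMeasurable (E.x t i) μ :=
    fun i hi => ((E.meas_x t i hi).mono (E.F.le (t + 1))).aestronglyMeasurable
  have hx_bd : ∀ i ∈ Finset.Icc 1 lam, ∀ᵐ ω ∂μ, |E.x t i ω| ≤ 1 := by
    intro i hi
    filter_upwards [E.x_binary t i hi] with ω hω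
    rcases hω with h | h <;> simp [h]
  have hx_int : ∀ i ∈ Finset.Icc 1 lam, Integrable (E.x t i) μ :=
    fun i hi => my_int_of_bound (hx_asm i hi) 1 (hx_bd i hi)
  -- first conditional moment
  have hcond1 : ∀ i ∈ Finset.Icc 1 lam, μ[E.x t i|E.F t] =ᵐ[μ] E.p t := by
    intro i hi
    have h := E.cond_iid t {i} (by simpa using hi)
    simpa using h
  -- second conditional moment
  have hcond2 : ∀ i ∈ Finset.Icc 1 lam, ∀ j ∈ Finset.Icc 1 lam, i ≠ j →
      μ[fun ω => E.x t i ω * E.x t j ω|E.F t] =ᵐ[μ] fun ω => E.p t ω * E.p t ω := by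
    intro i hi j hj hij
    have hsub : ({i, j} : Finset ℕ) ⊆ Finset.Icc 1 lam := by
      intro k hk
      simp only [Finset.mem_insert, Finset.mem_singleton] at hk
      rcases hk with rfl | rfl <;> assumption
    have h := E.cond_iid t {i, j} hsub
    rw [show ({i, j} : Finset ℕ).card = 2 from Finset.card_pair hij] at h
    simp only [Finset.prod_pair hij] at h
    refine h.trans (Filter.EventuallyEq.of_eq ?_)
    funext ω; rw [sq]
  -- the three pieces of the decomposition
  set F0 : Ω → ℝ := fun ω => γ 0 * E.p t ω - γ 0 ^ 2 * (E.p t ω * E.p t ω) with hF0def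
  set f1 : ℕ → Ω → ℝ :=
    fun i => γ i • ((fun ω => 1 - 2 * γ 0 * E.p t ω) * E.x t i) with hf1def
  set f2 : ℕ × ℕ → Ω → ℝ :=
    fun pr => (γ pr.1 * γ pr.2) • (fun ω => E.x t pr.1 ω * E.x t pr.2 ω) with hf2def
  set g1 : ℕ → Ω → ℝ :=
    fun i ω => γ i * ((1 - 2 * γ 0 * E.p t ω) * E.p t ω) with hg1def
  set φ : ℕ × ℕ → Ω → ℝ :=
    fun pr ω => γ pr.1 * γ pr.2 *
      (if pr.1 = pr.2 then E.p t ω else E.p t ω * E.p t ω) with hφdef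
  -- integrability
  have hF0_sm : StronglyMeasurable[E.F t] F0 :=
    (hq_sm.const_mul (γ 0)).sub ((hq_sm.mul hq_sm).const_mul (γ 0 ^ 2))
  have hF0_int : Integrable F0 μ := by
    refine my_int_of_bound (hF0_sm.mono hm_le).aestronglyMeasurable (|γ 0| + γ 0 ^ 2) ?_
    filter_upwards [hq_bd] with ω h
    refine (habs _ _).trans (add_le_add ?_ ?_)
    · rw [abs_mul]; exact mul_le_of_le_one_right (abs_nonneg _) h
    · rw [abs_mul, abs_mul, abs_pow, sq_abs]
      calc γ 0 ^ 2 * (|E.p t ω| * |E.p t ω|) ≤ γ 0 ^ 2 * (1 * 1) :=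
            mul_le_mul_of_nonneg_left
              (mul_le_mul h h (abs_nonneg _) zero_le_one) (by positivity)
        _ = γ 0 ^ 2 := by norm_num
  have hmul_int : ∀ i ∈ Finset.Icc 1 lam,
      Integrable ((fun ω => 1 - 2 * γ 0 * E.p t ω) * E.x t i) μ := by
    intro i hi
    refine my_int_of_bound
      ((aestronglyMeasurable_const.sub (hq_asm.const_mul _)).mul (hx_asm i hi))
      (1 + 2 * |γ 0|) ?_
    filter_upwards [hq_bd, hx_bd i hi] with ω h1 h2
    have h3 : |1 - 2 * γ 0 * E.p t ω| ≤ 1 + 2 * |γ 0| := by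
      refine (habs _ _).trans ?_
      rw [abs_one, abs_mul, abs_mul]
      have : |(2 : ℝ)| = 2 := by norm_num
      rw [this]
      nlinarith [abs_nonneg (γ 0)]
    calc |((fun ω => 1 - 2 * γ 0 * E.p t ω) * E.x t i) ω|
        = |1 - 2 * γ 0 * E.p t ω| * |E.x t i ω| := by
          simp [Pi.mul_apply, abs_mul]
      _ ≤ (1 + 2 * |γ 0|) * 1 := by
          refine mul_le_mul h3 h2 (abs_nonneg _) (by positivity)
      _ = 1 + 2 * |γ 0| := mul_one _
  have hf1_int : ∀ i ∈ Finset.Icc 1 lam, Integrable (f1 i) μ :=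
    fun i hi => (hmul_int i hi).smul (γ i)
  have hxx_int : ∀ pr : ℕ × ℕ, pr ∈ Finset.Icc 1 lam ×ˢ Finset.Icc 1 lam →
      Integrable (fun ω => E.x t pr.1 ω * E.x t pr.2 ω) μ := by
    rintro ⟨i, j⟩ hpr
    rw [Finset.mem_product] at hpr
    refine my_int_of_bound ((hx_asm i hpr.1).mul (hx_asm j hpr.2)) 1 ?_
    filter_upwards [hx_bd i hpr.1, hx_bd j hpr.2] with ω h1 h2
    rw [abs_mul]
    exact mul_le_one₀ h1 (abs_nonneg _) h2
  have hf2_int : ∀ pr ∈ Finset.Icc 1 lam ×ˢ Finset.Icc 1 lam, Integrable (f2 pr) μ :=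
    fun pr hpr => (hxx_int pr hpr).smul _
  have hSf1_int : Integrable (∑ i ∈ Finset.Icc 1 lam, f1 i) μ := by
    have h := integrable_finset_sum (μ := μ) (Finset.Icc 1 lam) hf1_int
    refine h.congr (Filter.EventuallyEq.of_eq ?_)
    funext a; simp
  have hSf2_int : Integrable (∑ pr ∈ Finset.Icc 1 lam ×ˢ Finset.Icc 1 lam, f2 pr) μ := by
    have h := integrable_finset_sum (μ := μ) (Finset.Icc 1 lam ×ˢ Finset.Icc 1 lam) hf2_int
    refine h.congr (Filter.EventuallyEq.of_eq ?_)
    funext a; simp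
  -- decomposition
  have hdecomp : (fun ω => E.p (t + 1) ω * (1 - E.p (t + 1) ω)) =ᵐ[μ]
      F0 + ∑ i ∈ Finset.Icc 1 lam, f1 i
        - ∑ pr ∈ Finset.Icc 1 lam ×ˢ Finset.Icc 1 lam, f2 pr := by
    filter_upwards [E.update t] with ω hω
    simp only [Pi.add_apply, Pi.sub_apply, Finset.sum_apply, hf1def, hf2def, hF0def,
      Pi.smul_apply, Pi.mul_apply, smul_eq_mul]
    rw [hω]
    have hS1 : ∑ i ∈ Finset.Icc 1 lam, γ i * ((1 - 2 * γ 0 * E.p t ω) * E.x t i ω)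
        = (1 - 2 * γ 0 * E.p t ω) * ∑ i ∈ Finset.Icc 1 lam, γ i * E.x t i ω := by
      rw [Finset.mul_sum]; exact Finset.sum_congr rfl fun i _ => by ring
    have hS2 : ∑ pr ∈ Finset.Icc 1 lam ×ˢ Finset.Icc 1 lam,
          γ pr.1 * γ pr.2 * (E.x t pr.1 ω * E.x t pr.2 ω)
        = (∑ i ∈ Finset.Icc 1 lam, γ i * E.x t i ω)
          * (∑ j ∈ Finset.Icc 1 lam, γ j * E.x t j ω) := by
      rw [Finset.sum_mul_sum, Finset.sum_product]
      exact Finset.sum_congr rfl fun i _ => Finset.sum_congr rfl fun j _ => by ring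
    rw [hS1, hS2]
    ring
  -- conditional expectation of each piece
  have hc1 : ∀ i ∈ Finset.Icc 1 lam, μ[f1 i|E.F t] =ᵐ[μ] g1 i := by
    intro i hi
    refine (condExp_smul (γ i) _ _).trans ?_
    have h := condExp_mul_of_stronglyMeasurable_left
      (stronglyMeasurable_const.sub (hq_sm.const_mul (2 * γ 0)))
      (hmul_int i hi) (hx_int i hi)
    have h2 := h.trans
      ((Filter.EventuallyEq.refl _ (fun ω => 1 - 2 * γ 0 * E.p t ω)).mul (hcond1 i hi))
    refine (h2.const_smul (γ i)).trans (Filter.EventuallyEq.of_eq ?_)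
    funext ω
    simp [hg1def, Pi.smul_apply, Pi.mul_apply, smul_eq_mul]
  have hc2 : ∀ pr ∈ Finset.Icc 1 lam ×ˢ Finset.Icc 1 lam, μ[f2 pr|E.F t] =ᵐ[μ] φ pr := by
    rintro ⟨i, j⟩ hpr
    rw [Finset.mem_product] at hpr
    by_cases hij : i = j
    · subst hij
      have hxx : (fun ω => E.x t i ω * E.x t i ω) =ᵐ[μ] E.x t i := by
        filter_upwards [E.x_binary t i hpr.1] with ω h
        rcases h with h | h <;> simp [h]
      refine (condExp_smul (γ i * γ i) _ _).trans ?_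
      have h := (condExp_congr_ae (m := E.F t) hxx).trans (hcond1 i hpr.1)
      refine (h.const_smul (γ i * γ i)).trans (Filter.EventuallyEq.of_eq ?_)
      funext ω
      simp [hφdef, Pi.smul_apply, smul_eq_mul]
    · refine (condExp_smul (γ i * γ j) _ _).trans ?_
      have h := hcond2 i hpr.1 j hpr.2 hij
      refine (h.const_smul (γ i * γ j)).trans (Filter.EventuallyEq.of_eq ?_)
      funext ω
      simp [hφdef, Pi.smul_apply, smul_eq_mul, if_neg hij]
  -- put it together
  have hmain : μ[fun ω => E.p (t + 1) ω * (1 - E.p (t + 1) ω)|E.F t] =ᵐ[μ]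
      F0 + ∑ i ∈ Finset.Icc 1 lam, g1 i
        - ∑ pr ∈ Finset.Icc 1 lam ×ˢ Finset.Icc 1 lam, φ pr := by
    refine (condExp_congr_ae hdecomp).trans ?_
    refine (condExp_sub (hF0_int.add hSf1_int) hSf2_int _).trans ?_
    refine (Filter.EventuallyEq.sub ((condExp_add hF0_int hSf1_int _).trans ?_)
      ((condExp_finsetSum hf2_int _).trans (my_eventuallyEq_sum _ _ _ hc2)))
    rw [condExp_of_stronglyMeasurable hm_le hF0_sm hF0_int]
    exact Filter.EventuallyEq.add (Filter.EventuallyEq.refl _ _)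
      ((condExp_finsetSum hf1_int _).trans (my_eventuallyEq_sum _ _ _ hc1))
  refine hmain.trans (Filter.EventuallyEq.of_eq ?_)
  -- final algebraic identity
  have hG1 : ∑ i ∈ Finset.Icc 1 lam, γ i = 1 - γ 0 := by
    have hins : Finset.range (lam + 1) = insert 0 (Finset.Icc 1 lam) := by
      ext k
      simp only [Finset.mem_range, Finset.mem_insert, Finset.mem_Icc]
      omega
    rw [hins, Finset.sum_insert (by simp)] at hsum
    linarith
  funext ω
  simp only [Pi.add_apply, Pi.sub_apply, Finset.sum_apply, hg1def, hφdef, hF0def]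
  rw [my_key_sum (Finset.Icc 1 lam) γ (E.p t ω) (E.p t ω * E.p t ω), ← Finset.sum_mul, hG1]
  ring
end

section
/- Assume additionally that s < 1. Then the sequence M_t := p_t(1 − p_t) / (1 − s)^t, t ≥ 0, is a martingale with respect to the filtration (ℱ_t)_{t≥0}. -/
open MeasureTheory ProbabilityTheory Finset

open Filter

section helpers

variable {Ω : Type*} [MeasurableSpace Ω] {μ : Measure Ω}

lemma ev_sum' {ι : Type*} (s : Finset ι) (f g : ι → Ω → ℝ)
    (h : ∀ i ∈ s, f i =ᵐ[μ] g i) : (∑ i ∈ s, f i) =ᵐ[μ] ∑ i ∈ s, g i := by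
  classical
  induction s using Finset.induction_on with
  | empty => simp
  | insert _ _ hnotmem ih =>
    rename_i a s
    rw [Finset.sum_insert hnotmem, Finset.sum_insert hnotmem]
    exact (h a (Finset.mem_insert_self a s)).add
      (ih fun i hi => h i (Finset.mem_insert_of_mem hi))

lemma int_bdd' [IsFiniteMeasure μ] {f : Ω → ℝ} (hf : AEStronglyMeasurable f μ) {C : ℝ}
    (hb : ∀ᵐ ω ∂μ, ‖f ω‖ ≤ C) : Integrable f μ :=
  (memLp_top_of_bound hf C hb).integrable le_top

lemma dsum_eval (γ : ℕ → ℝ) (lam : ℕ) (hsum : ∑ i ∈ Finset.Icc 0 lam, γ i = 1) (a b : ℝ) :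
    ∑ i ∈ Finset.Icc 0 lam, ∑ j ∈ Finset.Icc 0 lam,
      (γ i * γ j) * (b + (if i = j then (if i = 0 then 0 else a - b) else 0))
      = b + (∑ i ∈ Finset.Icc 1 lam, γ i ^ 2) * (a - b) := by
  classical
  have h0I : (0 : ℕ) ∉ Finset.Icc 1 lam := by simp
  have hJI : Finset.Icc 0 lam = insert 0 (Finset.Icc 1 lam) := by ext i; simp; omega
  have h1 : ∀ i ∈ Finset.Icc 0 lam,
      ∑ j ∈ Finset.Icc 0 lam,
        (γ i * γ j) * (b + (if i = j then (if i = 0 then 0 else a - b) else 0))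
      = γ i * b + γ i ^ 2 * (if i = 0 then 0 else a - b) := by
    intro i hi
    have h2 : ∀ j ∈ Finset.Icc 0 lam,
        (γ i * γ j) * (b + (if i = j then (if i = 0 then 0 else a - b) else 0))
        = γ i * b * γ j + (if j = i then γ i ^ 2 * (if i = 0 then 0 else a - b) else 0) := by
      intro j hj
      by_cases h : i = j
      · subst h; simp only [eq_self_iff_true, if_true]; ring
      · simp only [if_neg h, if_neg (Ne.symm h)]; ring
    rw [Finset.sum_congr rfl h2, Finset.sum_add_distrib, ← Finset.mul_sum, hsum,
      Finset.sum_ite_eq' (Finset.Icc 0 lam) i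
        (fun _ => γ i ^ 2 * (if i = 0 then 0 else a - b)), if_pos hi]
    ring
  rw [Finset.sum_congr rfl h1, Finset.sum_add_distrib, ← Finset.sum_mul, hsum, one_mul, hJI,
    Finset.sum_insert h0I, if_pos rfl, mul_zero, zero_add]
  have : ∀ i ∈ Finset.Icc 1 lam,
      γ i ^ 2 * (if i = 0 then 0 else a - b) = γ i ^ 2 * (a - b) := by
    intro i hi
    have : i ≠ 0 := by simp at hi; omega
    rw [if_neg this]
  rw [Finset.sum_congr rfl this, ← Finset.sum_mul]

end helpers

section key

variable {Ω : Type*} [MeasurableSpace Ω] {μ : Measure Ω} [IsProbabilityMeasure μ]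
  {lam : ℕ} {γ : ℕ → ℝ}

lemma neutral_key (hsum : ∑ i ∈ Finset.range (lam + 1), γ i = 1)
    (E : NeutralBitEDA μ lam γ) (t : ℕ) :
    μ[fun ω => E.p (t + 1) ω * (1 - E.p (t + 1) ω) | E.F t] =ᵐ[μ]
      fun ω => (1 - ∑ i ∈ Finset.Icc 1 lam, γ i ^ 2) * (E.p t ω * (1 - E.p t ω)) := by
  classical
  have hle : E.F t ≤ (inferInstance : MeasurableSpace Ω) := E.F.le t
  have h0I : (0 : ℕ) ∉ Finset.Icc 1 lam := by simp
  have hJI : Finset.Icc 0 lam = insert 0 (Finset.Icc 1 lam) := by ext i; simp; omega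
  have hsumJ : ∑ i ∈ Finset.Icc 0 lam, γ i = 1 := by
    rw [← hsum]; apply Finset.sum_congr _ fun i _ => rfl
    ext i; simp
  have hIJ : ∀ i ∈ Finset.Icc 0 lam, i ≠ 0 → i ∈ Finset.Icc 1 lam := by
    intro i hi h; simp only [Finset.mem_Icc] at hi ⊢; omega
  have hPsm : StronglyMeasurable[E.F t] (E.p t) := (E.adapted t).stronglyMeasurable
  have hPint : Integrable (E.p t) μ := E.integrable t
  -- the family Y with Y 0 = p t and Y i = x t i for i ≥ 1
  set Y : ℕ → Ω → ℝ := fun i => if i = 0 then E.p t else E.x t i with hY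
  have hYsm : ∀ i ∈ Finset.Icc 0 lam, StronglyMeasurable[E.F (t + 1)] (Y i) := by
    intro i hi
    by_cases h : i = 0
    · simpa [hY, h] using hPsm.mono (E.F.mono (Nat.le_succ t))
    · simpa [hY, h] using E.meas_x t i (hIJ i hi h)
  have hYaesm : ∀ i ∈ Finset.Icc 0 lam, AEStronglyMeasurable (Y i) μ := fun i hi =>
    ((hYsm i hi).mono (E.F.le _)).aestronglyMeasurable
  have hYb : ∀ i ∈ Finset.Icc 0 lam, ∀ᵐ ω ∂μ, ‖Y i ω‖ ≤ 1 := by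
    intro i hi
    by_cases h : i = 0
    · filter_upwards [E.p_range t] with ω hω
      simp only [hY, h, if_pos rfl]
      rw [Real.norm_eq_abs, abs_le]; exact ⟨by linarith [hω.1], hω.2⟩
    · filter_upwards [E.x_binary t i (hIJ i hi h)] with ω hω
      rcases hω with hω | hω <;> simp [hY, h, hω]
  have hYint : ∀ i ∈ Finset.Icc 0 lam, Integrable (Y i) μ := fun i hi =>
    int_bdd' (hYaesm i hi) (hYb i hi)
  have hYYint : ∀ i ∈ Finset.Icc 0 lam, ∀ j ∈ Finset.Icc 0 lam,
      Integrable (fun ω => Y i ω * Y j ω) μ := by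
    intro i hi j hj
    refine int_bdd' ((hYaesm i hi).mul (hYaesm j hj)) (C := 1) ?_
    filter_upwards [hYb i hi, hYb j hj] with ω h1 h2
    rw [norm_mul]
    exact mul_le_one₀ h1 (norm_nonneg _) h2
  -- single conditional moments
  have hXcond : ∀ i ∈ Finset.Icc 1 lam, μ[E.x t i | E.F t] =ᵐ[μ] E.p t := by
    intro i hi
    have h := E.cond_iid t {i} (by simpa using hi)
    simpa using h
  have hYcond : ∀ i ∈ Finset.Icc 0 lam, μ[Y i | E.F t] =ᵐ[μ] E.p t := by
    intro i hi
    by_cases h : i = 0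
    · have : Y i = E.p t := by simp [hY, h]
      rw [this, condExp_of_stronglyMeasurable hle hPsm hPint]
    · have : Y i = E.x t i := by simp [hY, h]
      rw [this]; exact hXcond i (hIJ i hi h)
  -- pair conditional moments
  have hYYcond : ∀ i ∈ Finset.Icc 0 lam, ∀ j ∈ Finset.Icc 0 lam,
      μ[fun ω => Y i ω * Y j ω | E.F t] =ᵐ[μ]
        fun ω => E.p t ω ^ 2
          + (if i = j then (if i = 0 then 0 else E.p t ω - E.p t ω ^ 2) else 0) := by
    intro i hi j hj
    by_cases hij : i = j
    · subst hij
      by_cases h0 : i = 0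
      · subst h0
        have hfe : (fun ω => Y 0 ω * Y 0 ω) = E.p t * E.p t := by
          funext ω; simp [hY]
        rw [hfe, condExp_of_stronglyMeasurable hle (hPsm.mul hPsm)
          (by rw [← hfe]; exact hYYint 0 hi 0 hj)]
        refine Eventually.of_forall fun ω => ?_
        simp; ring
      · have hb := E.x_binary t i (hIJ i hi h0)
        have h1 : (fun ω => Y i ω * Y i ω) =ᵐ[μ] Y i := by
          filter_upwards [hb] with ω h
          rcases h with h | h <;> simp [hY, h0, h]
        refine (condExp_congr_ae h1).trans ((hYcond i hi).trans ?_)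
        refine Eventually.of_forall fun ω => ?_
        simp [h0]
    · by_cases h0 : i = 0
      · subst h0
        have hj0 : j ≠ 0 := fun h => hij h.symm
        have hjI := hIJ j hj hj0
        have hfe : (fun ω => Y 0 ω * Y j ω) = E.p t * E.x t j := by
          funext ω; simp [hY, hj0]
        rw [hfe]
        have hint : Integrable (E.p t * E.x t j) μ := by
          rw [← hfe]; exact hYYint 0 hi j hj
        have hXj : Integrable (E.x t j) μ := by
          have := hYint j hj; simpa [hY, hj0] using this
        refine (condExp_mul_of_stronglyMeasurable_left hPsm hint hXj).trans ?_
        filter_upwards [hXcond j hjI] with ω h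
        simp only [Pi.mul_apply, h, if_neg hij]
        ring
      · by_cases hj0 : j = 0
        · subst hj0
          have hiI := hIJ i hi h0
          have hfe : (fun ω => Y i ω * Y 0 ω) = E.p t * E.x t i := by
            funext ω; simp [hY, h0]; ring
          rw [hfe]
          have hint : Integrable (E.p t * E.x t i) μ := by
            rw [← hfe]; exact hYYint i hi 0 hj
          have hXi : Integrable (E.x t i) μ := by
            have := hYint i hi; simpa [hY, h0] using this
          refine (condExp_mul_of_stronglyMeasurable_left hPsm hint hXi).trans ?_
          filter_upwards [hXcond i hiI] with ω h
          simp only [Pi.mul_apply, h, if_neg hij]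
          ring
        · have hiI := hIJ i hi h0
          have hjI := hIJ j hj hj0
          have hsub : ({i, j} : Finset ℕ) ⊆ Finset.Icc 1 lam := by
            intro k hk; simp only [Finset.mem_insert, Finset.mem_singleton] at hk
            rcases hk with rfl | rfl <;> assumption
          have h := E.cond_iid t {i, j} hsub
          have hcard : ({i, j} : Finset ℕ).card = 2 := Finset.card_pair hij
          have hprod : (fun ω => ∏ k ∈ ({i, j} : Finset ℕ), E.x t k ω)
              = fun ω => E.x t i ω * E.x t j ω := by
            funext ω; rw [Finset.prod_pair hij]
          rw [hprod, hcard] at h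
          have hfe : (fun ω => Y i ω * Y j ω) = fun ω => E.x t i ω * E.x t j ω := by
            funext ω; simp [hY, h0, hj0]
          rw [hfe]
          refine h.trans (Eventually.of_forall fun ω => ?_)
          simp [hij]
  -- decomposition of p (t+1)
  have hQ : E.p (t + 1) =ᵐ[μ] fun ω => ∑ i ∈ Finset.Icc 0 lam, γ i * Y i ω := by
    filter_upwards [E.update t] with ω h
    rw [h, hJI, Finset.sum_insert h0I]
    have h1 : γ 0 * Y 0 ω = γ 0 * E.p t ω := by simp [hY]
    have h2 : ∑ i ∈ Finset.Icc 1 lam, γ i * Y i ω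
        = ∑ i ∈ Finset.Icc 1 lam, γ i * E.x t i ω := by
      refine Finset.sum_congr rfl fun i hi => ?_
      have : i ≠ 0 := by simp only [Finset.mem_Icc] at hi; omega
      simp [hY, this]
    rw [h1, h2]
  set F1 : Ω → ℝ := fun ω => ∑ i ∈ Finset.Icc 0 lam, γ i * Y i ω with hF1
  set F2 : Ω → ℝ := fun ω => ∑ i ∈ Finset.Icc 0 lam, ∑ j ∈ Finset.Icc 0 lam,
    (γ i * γ j) * (Y i ω * Y j ω) with hF2
  have hQQ : (fun ω => E.p (t + 1) ω * (1 - E.p (t + 1) ω)) =ᵐ[μ] F1 - F2 := by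
    filter_upwards [hQ] with ω h
    simp only [Pi.sub_apply, hF1, hF2, h]
    rw [mul_one_sub]
    congr 1
    rw [Finset.sum_mul_sum]
    exact Finset.sum_congr rfl fun i _ => Finset.sum_congr rfl fun j _ => by ring
  have hF1int : Integrable F1 μ := by
    rw [hF1]
    exact integrable_finset_sum _ fun i hi => (hYint i hi).const_mul (γ i)
  have hF2int : Integrable F2 μ := by
    rw [hF2]
    exact integrable_finset_sum _ fun i hi =>
      integrable_finset_sum _ fun j hj => (hYYint i hi j hj).const_mul _
  have hC1 : μ[F1 | E.F t] =ᵐ[μ] E.p t := by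
    have hF1eq : F1 = ∑ i ∈ Finset.Icc 0 lam, fun ω => γ i * Y i ω := by
      funext ω; rw [Finset.sum_apply]
    rw [hF1eq]
    refine (condExp_finset_sum (m := E.F t) fun i hi => (hYint i hi).const_mul (γ i)).trans ?_
    refine (ev_sum' _ _ (fun i => fun ω => γ i * E.p t ω) fun i hi => ?_).trans ?_
    · have hs := condExp_smul (μ := μ) (m := E.F t) (γ i) (Y i)
      have he : (fun ω => γ i * Y i ω) = γ i • Y i := by
        funext ω; simp [smul_eq_mul]
      rw [he]
      refine hs.trans ?_
      filter_upwards [hYcond i hi] with ω h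
      simp [h]
    · refine Eventually.of_forall fun ω => ?_
      simp only [Finset.sum_apply]
      rw [← Finset.sum_mul, hsumJ, one_mul]
  have hC2 : μ[F2 | E.F t] =ᵐ[μ]
      fun ω => E.p t ω ^ 2 + (∑ i ∈ Finset.Icc 1 lam, γ i ^ 2)
        * (E.p t ω - E.p t ω ^ 2) := by
    have hF2eq : F2 = ∑ i ∈ Finset.Icc 0 lam,
        fun ω => ∑ j ∈ Finset.Icc 0 lam, (γ i * γ j) * (Y i ω * Y j ω) := by
      funext ω; rw [Finset.sum_apply]
    rw [hF2eq]
    refine (condExp_finset_sum (m := E.F t) fun i hi =>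
      integrable_finset_sum _ fun j hj => (hYYint i hi j hj).const_mul _).trans ?_
    refine (ev_sum' _ _
      (fun i => fun ω => ∑ j ∈ Finset.Icc 0 lam, (γ i * γ j) *
        (E.p t ω ^ 2 + (if i = j then (if i = 0 then 0 else E.p t ω - E.p t ω ^ 2) else 0)))
      fun i hi => ?_).trans ?_
    · have hfe : (fun ω => ∑ j ∈ Finset.Icc 0 lam, (γ i * γ j) * (Y i ω * Y j ω))
          = ∑ j ∈ Finset.Icc 0 lam, fun ω => (γ i * γ j) * (Y i ω * Y j ω) := by
        funext ω; rw [Finset.sum_apply]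
      rw [hfe]
      refine (condExp_finset_sum (m := E.F t) fun j hj => (hYYint i hi j hj).const_mul _).trans ?_
      refine (ev_sum' _ _
        (fun j => fun ω => (γ i * γ j) *
          (E.p t ω ^ 2 + (if i = j then (if i = 0 then 0 else E.p t ω - E.p t ω ^ 2) else 0)))
        fun j hj => ?_).trans ?_
      · have he : (fun ω => (γ i * γ j) * (Y i ω * Y j ω))
            = (γ i * γ j) • fun ω => Y i ω * Y j ω := by
          funext ω; simp [smul_eq_mul]
        rw [he]
        refine (condExp_smul (μ := μ) (m := E.F t) (γ i * γ j) _).trans ?_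
        filter_upwards [hYYcond i hi j hj] with ω h
        simp only [Pi.smul_apply, h, smul_eq_mul]
      · refine Eventually.of_forall fun ω => ?_
        rw [Finset.sum_apply]
    · refine Eventually.of_forall fun ω => ?_
      simp only [Finset.sum_apply]
      exact dsum_eval γ lam hsumJ (E.p t ω) (E.p t ω ^ 2)
  refine (condExp_congr_ae hQQ).trans ((condExp_sub (m := E.F t) hF1int hF2int).trans ?_)
  filter_upwards [hC1, hC2] with ω h1 h2
  simp only [Pi.sub_apply, h1, h2]
  ring

end key

/-- If `s = ∑_{i=1}^lam γ i ^ 2 < 1`, then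
`M t = p t * (1 - p t) / (1 - s) ^ t` is a martingale with respect to the
filtration `(F t)`. -/
theorem neutral_bit_potential_martingale {Ω : Type*} [MeasurableSpace Ω]
    (μ : Measure Ω) [IsProbabilityMeasure μ]
    (lam : ℕ) (hlam : 1 ≤ lam) (γ : ℕ → ℝ)
    (hsum : ∑ i ∈ Finset.range (lam + 1), γ i = 1)
    (hnz : ∃ i ∈ Finset.Icc 1 lam, γ i ≠ 0)
    (hs : (∑ i ∈ Finset.Icc 1 lam, γ i ^ 2) < 1)
    (E : NeutralBitEDA μ lam γ) :
    Martingale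
      (fun (t : ℕ) (ω : Ω) =>
        E.p t ω * (1 - E.p t ω) / (1 - ∑ i ∈ Finset.Icc 1 lam, γ i ^ 2) ^ t)
      E.F μ := by
  set s : ℝ := ∑ i ∈ Finset.Icc 1 lam, γ i ^ 2 with hsdef
  have hc : (0 : ℝ) < 1 - s := by linarith
  have hcne : (1 - s) ≠ 0 := ne_of_gt hc
  refine martingale_nat ?_ ?_ ?_
  · intro t
    simp only [div_eq_mul_inv]
    exact ((E.adapted t).stronglyMeasurable.mul (stronglyMeasurable_const.sub (E.adapted t).stronglyMeasurable)).mul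
      stronglyMeasurable_const
  · intro t
    refine int_bdd' (C := 1 / (1 - s) ^ t) ?_ ?_
    · simp only [div_eq_mul_inv]
      exact (((((E.adapted t).stronglyMeasurable.mono (E.F.le t)).mul
        (stronglyMeasurable_const.sub ((E.adapted t).stronglyMeasurable.mono (E.F.le t)))).mul
        stronglyMeasurable_const)).aestronglyMeasurable
    · filter_upwards [E.p_range t] with ω hω
      have h1 : |E.p t ω * (1 - E.p t ω)| ≤ 1 := by
        rw [abs_mul]
        have h2 : |E.p t ω| ≤ 1 := abs_le.mpr ⟨by linarith [hω.1], hω.2⟩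
        have h3 : |1 - E.p t ω| ≤ 1 := abs_le.mpr ⟨by linarith [hω.2], by linarith [hω.1]⟩
        calc |E.p t ω| * |1 - E.p t ω| ≤ 1 * 1 :=
          mul_le_mul h2 h3 (abs_nonneg _) zero_le_one
        _ = 1 := one_mul 1
      rw [Real.norm_eq_abs, abs_div, abs_of_pos (pow_pos hc t), div_le_div_iff_of_pos_right
        (pow_pos hc t)] at *
      · exact h1
  · intro t
    have hkey := neutral_key hsum E t
    have hfe : (fun ω => E.p (t + 1) ω * (1 - E.p (t + 1) ω) / (1 - s) ^ (t + 1))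
        = ((1 - s) ^ (t + 1))⁻¹ • fun ω => E.p (t + 1) ω * (1 - E.p (t + 1) ω) := by
      funext ω; simp [smul_eq_mul, div_eq_inv_mul]
    rw [hfe]
    refine EventuallyEq.symm ((condExp_smul (μ := μ) (m := E.F t)
      (((1 - s) ^ (t + 1))⁻¹) _).trans ?_)
    filter_upwards [hkey] with ω h
    simp only [Pi.smul_apply, h, smul_eq_mul]
    rw [pow_succ]
    field_simp
    ring
end

section
/- For every t ≥ 0, E[min(p_t, 1 − p_t)] ≤ (1/2)·(1 − s)^t. -/
open MeasureTheory ProbabilityTheory Finset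

set_option linter.unusedSectionVars false

namespace NeutralBitEDA

variable {Ω : Type*} [MeasurableSpace Ω] {μ : Measure Ω} [IsProbabilityMeasure μ]
  {lam : ℕ} {γ : ℕ → ℝ} (E : NeutralBitEDA μ lam γ)

lemma aux_int {f : Ω → ℝ} (hm : AEStronglyMeasurable f μ)
    (hb : ∀ᵐ ω ∂μ, |f ω| ≤ 1) : Integrable f μ :=
  (integrable_const (1 : ℝ)).mono' hm (by filter_upwards [hb] with ω h; simpa using h)

lemma p_meas (t : ℕ) : AEStronglyMeasurable (E.p t) μ :=
  ((E.adapted t).stronglyMeasurable.mono (E.F.le t)).aestronglyMeasurable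

lemma x_meas {t i : ℕ} (hi : i ∈ Finset.Icc 1 lam) : AEStronglyMeasurable (E.x t i) μ :=
  ((E.meas_x t i hi).mono (E.F.le (t + 1))).aestronglyMeasurable

lemma p_bdd (t : ℕ) : ∀ᵐ ω ∂μ, |E.p t ω| ≤ 1 := by
  filter_upwards [E.p_range t] with ω h
  rw [abs_le]
  exact ⟨by linarith [h.1], h.2⟩

lemma x_bdd {t i : ℕ} (hi : i ∈ Finset.Icc 1 lam) : ∀ᵐ ω ∂μ, |E.x t i ω| ≤ 1 := by
  filter_upwards [E.x_binary t i hi] with ω h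
  rcases h with h | h <;> simp [h]

lemma aux_int_mul {f g : Ω → ℝ} (hmf : AEStronglyMeasurable f μ)
    (hmg : AEStronglyMeasurable g μ) (hbf : ∀ᵐ ω ∂μ, |f ω| ≤ 1)
    (hbg : ∀ᵐ ω ∂μ, |g ω| ≤ 1) : Integrable (fun ω => f ω * g ω) μ := by
  refine aux_int (hmf.mul hmg) ?_
  filter_upwards [hbf, hbg] with ω h1 h2
  rw [abs_mul]
  calc |f ω| * |g ω| ≤ 1 * 1 := mul_le_mul h1 h2 (abs_nonneg _) zero_le_one
    _ = 1 := by norm_num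

lemma int_pp (t : ℕ) : Integrable (fun ω => E.p t ω * E.p t ω) μ :=
  aux_int_mul (E.p_meas t) (E.p_meas t) (E.p_bdd t) (E.p_bdd t)

lemma int_xi {t i : ℕ} (hi : i ∈ Finset.Icc 1 lam) : Integrable (E.x t i) μ :=
  aux_int (E.x_meas hi) (E.x_bdd hi)

lemma condexp_x {t i : ℕ} (hi : i ∈ Finset.Icc 1 lam) :
    μ[E.x t i | E.F t] =ᵐ[μ] E.p t := by
  have h := E.cond_iid t {i} (Finset.singleton_subset_iff.2 hi)
  simpa using h

lemma int_x {t i : ℕ} (hi : i ∈ Finset.Icc 1 lam) :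
    ∫ ω, E.x t i ω ∂μ = ∫ ω, E.p t ω ∂μ :=
  calc ∫ ω, E.x t i ω ∂μ
      = ∫ ω, (μ[E.x t i | E.F t]) ω ∂μ := (integral_condExp (E.F.le t)).symm
    _ = ∫ ω, E.p t ω ∂μ := integral_congr_ae (E.condexp_x hi)

lemma int_px {t i : ℕ} (hi : i ∈ Finset.Icc 1 lam) :
    ∫ ω, E.p t ω * E.x t i ω ∂μ = ∫ ω, E.p t ω * E.p t ω ∂μ := by
  have hmul : Integrable (E.p t * E.x t i) μ :=
    aux_int_mul (E.p_meas t) (E.x_meas hi) (E.p_bdd t) (E.x_bdd hi)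
  have h := condExp_mul_of_stronglyMeasurable_left (E.adapted t).stronglyMeasurable hmul (E.int_xi hi)
  have h2 : μ[E.p t * E.x t i | E.F t] =ᵐ[μ] fun ω => E.p t ω * E.p t ω := by
    refine h.trans ?_
    filter_upwards [E.condexp_x (t := t) hi] with ω hω
    simp only [Pi.mul_apply, hω]
  calc ∫ ω, E.p t ω * E.x t i ω ∂μ
      = ∫ ω, (μ[E.p t * E.x t i | E.F t]) ω ∂μ := (integral_condExp (E.F.le t)).symm
    _ = ∫ ω, E.p t ω * E.p t ω ∂μ := integral_congr_ae h2

lemma int_xx {t i j : ℕ} (hi : i ∈ Finset.Icc 1 lam) (hj : j ∈ Finset.Icc 1 lam)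
    (hij : i ≠ j) :
    ∫ ω, E.x t i ω * E.x t j ω ∂μ = ∫ ω, E.p t ω * E.p t ω ∂μ := by
  have h := E.cond_iid t {i, j} (by
    intro k hk
    simp only [Finset.mem_insert, Finset.mem_singleton] at hk
    rcases hk with rfl | rfl <;> assumption)
  have h2 : μ[fun ω => E.x t i ω * E.x t j ω | E.F t]
      =ᵐ[μ] fun ω => E.p t ω * E.p t ω := by
    have hc : ({i, j} : Finset ℕ).card = 2 := Finset.card_pair hij
    simpa [Finset.prod_pair hij, hc, pow_two] using h
  calc ∫ ω, E.x t i ω * E.x t j ω ∂μ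
      = ∫ ω, (μ[fun ω => E.x t i ω * E.x t j ω | E.F t]) ω ∂μ :=
        (integral_condExp (E.F.le t)).symm
    _ = ∫ ω, E.p t ω * E.p t ω ∂μ := integral_congr_ae h2

lemma int_xx_self {t i : ℕ} (hi : i ∈ Finset.Icc 1 lam) :
    ∫ ω, E.x t i ω * E.x t i ω ∂μ = ∫ ω, E.p t ω ∂μ := by
  have h : ∫ ω, E.x t i ω * E.x t i ω ∂μ = ∫ ω, E.x t i ω ∂μ := by
    apply integral_congr_ae
    filter_upwards [E.x_binary t i hi] with ω h
    rcases h with h | h <;> simp [h]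
  rw [h, E.int_x hi]

lemma step (hsum : ∑ i ∈ Finset.range (lam + 1), γ i = 1) (t : ℕ) :
    ∫ ω, E.p (t + 1) ω * (1 - E.p (t + 1) ω) ∂μ
      = (1 - ∑ i ∈ Finset.Icc 1 lam, γ i ^ 2) *
        ∫ ω, E.p t ω * (1 - E.p t ω) ∂μ := by
  set A := ∫ ω, E.p t ω ∂μ with hA
  set B := ∫ ω, E.p t ω * E.p t ω ∂μ with hB
  set T := ∑ i ∈ Finset.Icc 1 lam, γ i with hT
  set s := ∑ i ∈ Finset.Icc 1 lam, γ i ^ 2 with hs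
  have hins : Finset.range (lam + 1) = insert 0 (Finset.Icc 1 lam) := by
    ext k
    simp only [Finset.mem_range, Finset.mem_insert, Finset.mem_Icc]
    omega
  have hcT : γ 0 + T = 1 := by
    rw [hT, ← hsum, hins, Finset.sum_insert (by simp)]
  -- integrability
  have hiP : Integrable (E.p t) μ := E.integrable t
  have hiPP : Integrable (fun ω => E.p t ω * E.p t ω) μ := E.int_pp t
  have hiX : ∀ i ∈ Finset.Icc 1 lam, Integrable (E.x t i) μ := fun i hi => E.int_xi hi
  have hiPX : ∀ i ∈ Finset.Icc 1 lam, Integrable (fun ω => E.p t ω * E.x t i ω) μ :=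
    fun i hi => aux_int_mul (E.p_meas t) (E.x_meas hi) (E.p_bdd t) (E.x_bdd hi)
  have hiXX : ∀ i ∈ Finset.Icc 1 lam, ∀ j ∈ Finset.Icc 1 lam,
      Integrable (fun ω => E.x t i ω * E.x t j ω) μ :=
    fun i hi j hj => aux_int_mul (E.x_meas hi) (E.x_meas hj) (E.x_bdd hi) (E.x_bdd hj)
  -- first moment of p (t+1)
  have hI1 : ∫ ω, E.p (t + 1) ω ∂μ = A := by
    have h1 : ∫ ω, E.p (t + 1) ω ∂μ
        = ∫ ω, (γ 0 * E.p t ω + ∑ i ∈ Finset.Icc 1 lam, γ i * E.x t i ω) ∂μ :=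
      integral_congr_ae (E.update t)
    rw [h1, integral_add (hiP.const_mul _)
        (integrable_finset_sum _ fun i hi => (hiX i hi).const_mul _),
      integral_const_mul, integral_finset_sum _ fun i hi => (hiX i hi).const_mul _]
    have h2 : ∀ i ∈ Finset.Icc 1 lam,
        ∫ ω, γ i * E.x t i ω ∂μ = γ i * A := by
      intro i hi
      rw [integral_const_mul, E.int_x hi]
    rw [Finset.sum_congr rfl h2, ← Finset.sum_mul, ← hT]
    linear_combination A * hcT
  -- second moment of p (t+1)
  have hI2 : ∫ ω, E.p (t + 1) ω * E.p (t + 1) ω ∂μ = B + s * (A - B) := by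
    have h1 : ∫ ω, E.p (t + 1) ω * E.p (t + 1) ω ∂μ
        = ∫ ω, (γ 0 * γ 0 * (E.p t ω * E.p t ω)
            + ((∑ i ∈ Finset.Icc 1 lam, 2 * (γ 0 * γ i) * (E.p t ω * E.x t i ω))
            + ∑ i ∈ Finset.Icc 1 lam, ∑ j ∈ Finset.Icc 1 lam,
                γ i * γ j * (E.x t i ω * E.x t j ω))) ∂μ := by
      apply integral_congr_ae
      filter_upwards [E.update t] with ω hω
      rw [hω]
      have e2 : (2 * (γ 0 * E.p t ω)) * (∑ i ∈ Finset.Icc 1 lam, γ i * E.x t i ω)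
          = ∑ i ∈ Finset.Icc 1 lam, 2 * (γ 0 * γ i) * (E.p t ω * E.x t i ω) := by
        rw [Finset.mul_sum]
        exact Finset.sum_congr rfl fun i _ => by ring
      have e3 : (∑ i ∈ Finset.Icc 1 lam, γ i * E.x t i ω)
            * (∑ j ∈ Finset.Icc 1 lam, γ j * E.x t j ω)
          = ∑ i ∈ Finset.Icc 1 lam, ∑ j ∈ Finset.Icc 1 lam,
              γ i * γ j * (E.x t i ω * E.x t j ω) := by
        rw [Finset.sum_mul_sum]
        exact Finset.sum_congr rfl fun i _ => Finset.sum_congr rfl fun j _ => by ring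
      rw [← e2, ← e3]
      ring
    have ha : Integrable (fun ω => γ 0 * γ 0 * (E.p t ω * E.p t ω)) μ :=
      hiPP.const_mul _
    have hb : Integrable
        (fun ω => ∑ i ∈ Finset.Icc 1 lam, 2 * (γ 0 * γ i) * (E.p t ω * E.x t i ω)) μ :=
      integrable_finset_sum _ fun i hi => (hiPX i hi).const_mul _
    have hc : Integrable (fun ω => ∑ i ∈ Finset.Icc 1 lam, ∑ j ∈ Finset.Icc 1 lam,
        γ i * γ j * (E.x t i ω * E.x t j ω)) μ :=
      integrable_finset_sum _ fun i hi =>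
        integrable_finset_sum _ fun j hj => (hiXX i hi j hj).const_mul _
    have hbc : Integrable (fun ω => (∑ i ∈ Finset.Icc 1 lam,
        2 * (γ 0 * γ i) * (E.p t ω * E.x t i ω))
        + ∑ i ∈ Finset.Icc 1 lam, ∑ j ∈ Finset.Icc 1 lam,
            γ i * γ j * (E.x t i ω * E.x t j ω)) μ := hb.add hc
    rw [h1, integral_add ha hbc, integral_add hb hc, integral_const_mul,
      integral_finset_sum _ fun i hi => (hiPX i hi).const_mul _,
      integral_finset_sum _ fun i hi =>
        integrable_finset_sum _ fun j hj => (hiXX i hi j hj).const_mul _]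
    have e2 : ∑ i ∈ Finset.Icc 1 lam,
        ∫ ω, 2 * (γ 0 * γ i) * (E.p t ω * E.x t i ω) ∂μ = T * (2 * γ 0 * B) := by
      have h2 : ∀ i ∈ Finset.Icc 1 lam,
          ∫ ω, 2 * (γ 0 * γ i) * (E.p t ω * E.x t i ω) ∂μ = γ i * (2 * γ 0 * B) := by
        intro i hi
        rw [integral_const_mul, E.int_px hi, ← hB]
        ring
      rw [Finset.sum_congr rfl h2, ← Finset.sum_mul, ← hT]
    have e3 : ∑ i ∈ Finset.Icc 1 lam,
        ∫ ω, (∑ j ∈ Finset.Icc 1 lam, γ i * γ j * (E.x t i ω * E.x t j ω)) ∂μ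
        = s * (A - B) + T * (T * B) := by
      have hrow : ∀ i ∈ Finset.Icc 1 lam,
          ∫ ω, (∑ j ∈ Finset.Icc 1 lam, γ i * γ j * (E.x t i ω * E.x t j ω)) ∂μ
            = γ i ^ 2 * (A - B) + γ i * (T * B) := by
        intro i hi
        rw [integral_finset_sum _ fun j hj => (hiXX i hi j hj).const_mul _]
        have h4 : ∀ j ∈ Finset.Icc 1 lam,
            ∫ ω, γ i * γ j * (E.x t i ω * E.x t j ω) ∂μ
              = (if j = i then γ i ^ 2 * (A - B) else 0) + γ j * (γ i * B) := by
          intro j hj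
          rw [integral_const_mul]
          by_cases hji : j = i
          · subst hji
            rw [if_pos rfl, E.int_xx_self hj, ← hA]
            ring
          · rw [if_neg hji, E.int_xx hi hj fun h => hji h.symm, ← hB]
            ring
        rw [Finset.sum_congr rfl h4, Finset.sum_add_distrib,
          Finset.sum_ite_eq' _ i, if_pos hi, ← Finset.sum_mul, ← hT]
        ring
      rw [Finset.sum_congr rfl hrow, Finset.sum_add_distrib, ← Finset.sum_mul,
        ← Finset.sum_mul, ← hs, ← hT]
    rw [e2, e3, ← hB]
    linear_combination (B * (γ 0 + T + 1)) * hcT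
  have hsplit : ∀ u : ℕ, ∫ ω, E.p u ω * (1 - E.p u ω) ∂μ
      = (∫ ω, E.p u ω ∂μ) - ∫ ω, E.p u ω * E.p u ω ∂μ := by
    intro u
    rw [← integral_sub (E.integrable u) (E.int_pp u)]
    exact integral_congr_ae (ae_of_all _ fun ω => by ring)
  rw [hsplit (t + 1), hsplit t, hI1, hI2, ← hA, ← hB]
  ring

end NeutralBitEDA

/-- For every `t ≥ 0`, `E[min (p t) (1 - p t)] ≤ (1/2) * (1 - s) ^ t`, where
`s = ∑_{i=1}^lam γ i ^ 2`. -/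
theorem neutral_bit_expected_distance {Ω : Type*} [MeasurableSpace Ω]
    (μ : Measure Ω) [IsProbabilityMeasure μ]
    (lam : ℕ) (hlam : 1 ≤ lam) (γ : ℕ → ℝ)
    (hsum : ∑ i ∈ Finset.range (lam + 1), γ i = 1)
    (hnz : ∃ i ∈ Finset.Icc 1 lam, γ i ≠ 0)
    (E : NeutralBitEDA μ lam γ) (t : ℕ) :
    ∫ ω, min (E.p t ω) (1 - E.p t ω) ∂μ
      ≤ (1 / 2) * (1 - ∑ i ∈ Finset.Icc 1 lam, γ i ^ 2) ^ t := by
  have key : ∀ n : ℕ, ∫ ω, E.p n ω * (1 - E.p n ω) ∂μ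
      = 1 / 4 * (1 - ∑ i ∈ Finset.Icc 1 lam, γ i ^ 2) ^ n := by
    intro n
    induction n with
    | zero =>
      have h0 : ∫ ω, E.p 0 ω * (1 - E.p 0 ω) ∂μ = ∫ _ω, (1 / 4 : ℝ) ∂μ := by
        apply integral_congr_ae
        filter_upwards [E.p_zero] with ω h
        rw [h]; norm_num
      rw [h0]; simp
    | succ n ih =>
      rw [E.step hsum n, ih]; ring
  have hmin : ∀ᵐ ω ∂μ, min (E.p t ω) (1 - E.p t ω)
      ≤ 2 * (E.p t ω * (1 - E.p t ω)) := by
    filter_upwards [E.p_range t] with ω h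
    obtain ⟨h0, h1⟩ := h
    rcases le_total (E.p t ω) (1 - E.p t ω) with hc | hc
    · rw [min_eq_left hc]; nlinarith
    · rw [min_eq_right hc]; nlinarith
  have hintmin : Integrable (fun ω => min (E.p t ω) (1 - E.p t ω)) μ := by
    apply NeutralBitEDA.aux_int
    · have hm := ((E.adapted t).stronglyMeasurable.mono (E.F.le t)).measurable
      exact (hm.min (measurable_const.sub hm)).aestronglyMeasurable
    · filter_upwards [E.p_range t] with ω h
      obtain ⟨h0, h1⟩ := h
      rw [abs_le]
      exact ⟨le_min (by linarith) (by linarith), (min_le_left _ _).trans h1⟩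
  have hint2 : Integrable (fun ω => 2 * (E.p t ω * (1 - E.p t ω))) μ := by
    have h1 : Integrable (fun ω => E.p t ω - E.p t ω * E.p t ω) μ :=
      (E.integrable t).sub (E.int_pp t)
    have h2 : (fun ω => 2 * (E.p t ω * (1 - E.p t ω)))
        = fun ω => 2 * (E.p t ω - E.p t ω * E.p t ω) := by funext ω; ring
    rw [h2]; exact h1.const_mul 2
  calc ∫ ω, min (E.p t ω) (1 - E.p t ω) ∂μ
      ≤ ∫ ω, 2 * (E.p t ω * (1 - E.p t ω)) ∂μ := integral_mono_ae hintmin hint2 hmin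
    _ = 2 * ∫ ω, E.p t ω * (1 - E.p t ω) ∂μ := integral_const_mul _ _
    _ = 1 / 2 * (1 - ∑ i ∈ Finset.Icc 1 lam, γ i ^ 2) ^ t := by rw [key t]; ring
end

section
/- Let T_L := min{ t ≥ 0 : p_t ≤ 1/3 or p_t ≥ 2/3 } be the first time the neutral-bit frequency leaves the open interval (1/3, 2/3). Then for every t ≥ 0, P[T_L ≥ t + 1] ≤ (3/2)·(1 − s)^t. -/
open MeasureTheory ProbabilityTheory Finset
open scoped ENNReal NNReal

namespace NBaux

variable {Ω : Type*} [MeasurableSpace Ω] {μ : Measure Ω} [IsProbabilityMeasure μ]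
  {lam : ℕ} {γ : ℕ → ℝ} (E : NeutralBitEDA μ lam γ)

lemma int_of_bdd {f : Ω → ℝ} (hf : AEStronglyMeasurable f μ) (C : ℝ)
    (h : ∀ᵐ ω ∂μ, |f ω| ≤ C) : Integrable f μ :=
  Integrable.mono' (integrable_const C) hf (by filter_upwards [h] with ω hω; simpa using hω)

lemma meas_p (t : ℕ) : AEStronglyMeasurable (E.p t) μ :=
  ((E.adapted t).mono (E.F.le t) le_rfl).aestronglyMeasurable

lemma meas_x' {t i : ℕ} (hi : i ∈ Finset.Icc 1 lam) : AEStronglyMeasurable (E.x t i) μ :=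
  ((E.meas_x t i hi).mono (E.F.le (t + 1))).aestronglyMeasurable

lemma x_abs {t i : ℕ} (hi : i ∈ Finset.Icc 1 lam) : ∀ᵐ ω ∂μ, |E.x t i ω| ≤ 1 := by
  filter_upwards [E.x_binary t i hi] with ω hω
  rcases hω with h | h <;> simp [h]

lemma p_abs (t : ℕ) : ∀ᵐ ω ∂μ, |E.p t ω| ≤ 1 := by
  filter_upwards [E.p_range t] with ω hω
  rw [abs_le]; exact ⟨by linarith [hω.1], hω.2⟩

lemma x_int {t i : ℕ} (hi : i ∈ Finset.Icc 1 lam) : Integrable (E.x t i) μ :=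
  int_of_bdd (meas_x' E hi) 1 (x_abs E hi)

lemma psq_int (t : ℕ) : Integrable (fun ω => E.p t ω ^ 2) μ := by
  have hm : AEStronglyMeasurable (fun ω => E.p t ω ^ 2) μ := by
    exact ((meas_p E t).mul (meas_p E t)).congr (Filter.Eventually.of_forall fun ω => by simp [sq])
  refine int_of_bdd hm 1 ?_
  filter_upwards [p_abs E t] with ω hω
  rw [abs_pow]; nlinarith [abs_nonneg (E.p t ω)]

lemma px_int {t i : ℕ} (hi : i ∈ Finset.Icc 1 lam) :
    Integrable (fun ω => E.p t ω * E.x t i ω) μ := by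
  refine int_of_bdd ((meas_p E t).mul (meas_x' E hi)) 1 ?_
  filter_upwards [p_abs E t, x_abs E hi] with ω h1 h2
  rw [abs_mul]; nlinarith [abs_nonneg (E.p t ω), abs_nonneg (E.x t i ω)]

lemma xx_int {t i j : ℕ} (hi : i ∈ Finset.Icc 1 lam) (hj : j ∈ Finset.Icc 1 lam) :
    Integrable (fun ω => E.x t i ω * E.x t j ω) μ := by
  refine int_of_bdd ((meas_x' E hi).mul (meas_x' E hj)) 1 ?_
  filter_upwards [x_abs E hi, x_abs E hj] with ω h1 h2
  rw [abs_mul]; nlinarith [abs_nonneg (E.x t i ω), abs_nonneg (E.x t j ω)]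

/-- `E[x t i] = E[p t]`. -/
lemma int_x {t i : ℕ} (hi : i ∈ Finset.Icc 1 lam) :
    ∫ ω, E.x t i ω ∂μ = ∫ ω, E.p t ω ∂μ := by
  have h := E.cond_iid t {i} (by simpa using hi)
  simp only [Finset.prod_singleton, Finset.card_singleton, pow_one] at h
  rw [← integral_condExp (E.F.le t) (f := fun ω => E.x t i ω)]
  exact integral_congr_ae h

/-- `E[x t i * x t j] = E[p t ^ 2]` for `i ≠ j`. -/
lemma int_xx_ne {t i j : ℕ} (hi : i ∈ Finset.Icc 1 lam) (hj : j ∈ Finset.Icc 1 lam)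
    (hij : i ≠ j) : ∫ ω, E.x t i ω * E.x t j ω ∂μ = ∫ ω, E.p t ω ^ 2 ∂μ := by
  have h := E.cond_iid t {i, j} (by
    intro a ha
    simp only [Finset.mem_insert, Finset.mem_singleton] at ha
    rcases ha with rfl | rfl <;> assumption)
  simp only [Finset.prod_pair hij, Finset.card_pair hij] at h
  rw [← integral_condExp (E.F.le t) (f := fun ω => E.x t i ω * E.x t j ω)]
  exact integral_congr_ae h

/-- `E[x t i * x t i] = E[p t]`. -/
lemma int_xx_eq {t i : ℕ} (hi : i ∈ Finset.Icc 1 lam) :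
    ∫ ω, E.x t i ω * E.x t i ω ∂μ = ∫ ω, E.p t ω ∂μ := by
  rw [← int_x E hi]
  refine integral_congr_ae ?_
  filter_upwards [E.x_binary t i hi] with ω hω
  rcases hω with h | h <;> simp [h]

/-- `E[p t * x t i] = E[p t ^ 2]`. -/
lemma int_px {t i : ℕ} (hi : i ∈ Finset.Icc 1 lam) :
    ∫ ω, E.p t ω * E.x t i ω ∂μ = ∫ ω, E.p t ω ^ 2 ∂μ := by
  have hmul : μ[(fun ω => E.p t ω) * fun ω => E.x t i ω | E.F t]
      =ᵐ[μ] (fun ω => E.p t ω) * μ[fun ω => E.x t i ω | E.F t] :=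
    condExp_mul_of_stronglyMeasurable_left (E.adapted t).stronglyMeasurable (px_int E hi) (x_int E hi)
  have h1 := E.cond_iid t {i} (by simpa using hi)
  simp only [Finset.prod_singleton, Finset.card_singleton, pow_one] at h1
  rw [← integral_condExp (E.F.le t) (f := fun ω => E.p t ω * E.x t i ω)]
  refine integral_congr_ae ?_
  filter_upwards [hmul, h1] with ω h2 h3
  have e : ((fun ω => E.p t ω) * fun ω => E.x t i ω) = fun ω => E.p t ω * E.x t i ω := rfl
  rw [e] at h2
  simpa [sq, h3] using h2

/-- Martingale property in expectation. -/
lemma int_p_succ (hsum1 : ∑ i ∈ Finset.Icc 1 lam, γ i = 1 - γ 0) (t : ℕ) : ∫ ω, E.p (t + 1) ω ∂μ = ∫ ω, E.p t ω ∂μ := by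
  have h1 : ∫ ω, E.p (t + 1) ω ∂μ
      = ∫ ω, (γ 0 * E.p t ω + ∑ i ∈ Finset.Icc 1 lam, γ i * E.x t i ω) ∂μ :=
    integral_congr_ae (by filter_upwards [E.update t] with ω h using h)
  rw [h1, integral_add ((E.integrable t).const_mul _)
    (integrable_finset_sum _ fun i hi => (x_int E hi).const_mul _),
    integral_const_mul, integral_finset_sum _ fun i hi => (x_int E hi).const_mul _]
  have : ∀ i ∈ Finset.Icc 1 lam, ∫ ω, γ i * E.x t i ω ∂μ = γ i * ∫ ω, E.p t ω ∂μ := by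
    intro i hi; rw [integral_const_mul, int_x E hi]
  rw [Finset.sum_congr rfl this, ← Finset.sum_mul, hsum1]
  ring

/-- Second moment recursion. -/
lemma int_psq_succ (hsum1 : ∑ i ∈ Finset.Icc 1 lam, γ i = 1 - γ 0) (t : ℕ) :
    ∫ ω, E.p (t + 1) ω ^ 2 ∂μ
      = ∫ ω, E.p t ω ^ 2 ∂μ
        + (∑ i ∈ Finset.Icc 1 lam, γ i ^ 2)
          * (∫ ω, E.p t ω ∂μ - ∫ ω, E.p t ω ^ 2 ∂μ) := by
  set P := ∫ ω, E.p t ω ∂μ with hP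
  set Q := ∫ ω, E.p t ω ^ 2 ∂μ with hQ
  set s := ∑ i ∈ Finset.Icc 1 lam, γ i ^ 2 with hs
  have h1 : ∫ ω, E.p (t + 1) ω ^ 2 ∂μ
      = ∫ ω, (γ 0 ^ 2 * E.p t ω ^ 2
          + 2 * γ 0 * ∑ i ∈ Finset.Icc 1 lam, γ i * (E.p t ω * E.x t i ω)
          + ∑ i ∈ Finset.Icc 1 lam, ∑ j ∈ Finset.Icc 1 lam,
              γ i * γ j * (E.x t i ω * E.x t j ω)) ∂μ := by
    refine integral_congr_ae ?_
    filter_upwards [E.update t] with ω h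
    rw [h]
    have hsq : (∑ i ∈ Finset.Icc 1 lam, γ i * E.x t i ω) ^ 2
        = ∑ i ∈ Finset.Icc 1 lam, ∑ j ∈ Finset.Icc 1 lam,
            γ i * γ j * (E.x t i ω * E.x t j ω) := by
      rw [sq, Finset.sum_mul_sum]
      exact Finset.sum_congr rfl fun i _ => Finset.sum_congr rfl fun j _ => by ring
    have hmid : E.p t ω * ∑ i ∈ Finset.Icc 1 lam, γ i * E.x t i ω
        = ∑ i ∈ Finset.Icc 1 lam, γ i * (E.p t ω * E.x t i ω) := by
      rw [Finset.mul_sum]; exact Finset.sum_congr rfl fun i _ => by ring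
    linear_combination 2 * γ 0 * hmid + hsq
  have int_inner : ∀ i ∈ Finset.Icc 1 lam, Integrable
      (fun ω => ∑ j ∈ Finset.Icc 1 lam, γ i * γ j * (E.x t i ω * E.x t j ω)) μ :=
    fun i hi => integrable_finset_sum _ fun j hj => ((xx_int E hi hj).const_mul _)
  have hA : Integrable (fun ω => γ 0 ^ 2 * E.p t ω ^ 2) μ := (psq_int E t).const_mul _
  have hB : Integrable (fun ω =>
      2 * γ 0 * ∑ i ∈ Finset.Icc 1 lam, γ i * (E.p t ω * E.x t i ω)) μ :=
    ((integrable_finset_sum _ fun i hi => ((px_int E hi).const_mul _))).const_mul _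
  have hC : Integrable (fun ω => ∑ i ∈ Finset.Icc 1 lam, ∑ j ∈ Finset.Icc 1 lam,
      γ i * γ j * (E.x t i ω * E.x t j ω)) μ := integrable_finset_sum _ int_inner
  have hAB : Integrable (fun ω => γ 0 ^ 2 * E.p t ω ^ 2
      + 2 * γ 0 * ∑ i ∈ Finset.Icc 1 lam, γ i * (E.p t ω * E.x t i ω)) μ := hA.add hB
  rw [h1, integral_add hAB hC, integral_add hA hB]
  have e1 : ∫ ω, γ 0 ^ 2 * E.p t ω ^ 2 ∂μ = γ 0 ^ 2 * Q := by
    rw [integral_const_mul]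
  have e2 : ∫ ω, 2 * γ 0 * ∑ i ∈ Finset.Icc 1 lam, γ i * (E.p t ω * E.x t i ω) ∂μ
      = 2 * γ 0 * (1 - γ 0) * Q := by
    rw [integral_const_mul, integral_finset_sum _
      (fun i hi => ((px_int E hi).const_mul _))]
    have : ∀ i ∈ Finset.Icc 1 lam,
        ∫ ω, γ i * (E.p t ω * E.x t i ω) ∂μ = γ i * Q := by
      intro i hi; rw [integral_const_mul, int_px E hi]
    rw [Finset.sum_congr rfl this, ← Finset.sum_mul, hsum1]; ring
  have e3 : ∫ ω, (∑ i ∈ Finset.Icc 1 lam, ∑ j ∈ Finset.Icc 1 lam,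
      γ i * γ j * (E.x t i ω * E.x t j ω)) ∂μ
      = (1 - γ 0) ^ 2 * Q + s * (P - Q) := by
    rw [integral_finset_sum _ int_inner]
    have hrow : ∀ i ∈ Finset.Icc 1 lam,
        ∫ ω, (∑ j ∈ Finset.Icc 1 lam, γ i * γ j * (E.x t i ω * E.x t j ω)) ∂μ
          = (∑ j ∈ Finset.Icc 1 lam, γ i * γ j * Q) + γ i ^ 2 * (P - Q) := by
      intro i hi
      rw [integral_finset_sum _ fun j hj => ((xx_int E hi hj).const_mul _)]
      have hterm : ∀ j ∈ Finset.Icc 1 lam,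
          ∫ ω, γ i * γ j * (E.x t i ω * E.x t j ω) ∂μ
            = γ i * γ j * Q + (if j = i then γ i ^ 2 * (P - Q) else 0) := by
        intro j hj
        rw [integral_const_mul]
        by_cases hij : j = i
        · subst hij
          rw [int_xx_eq E hj, if_pos rfl]
          ring
        · rw [int_xx_ne E hi hj (Ne.symm hij)]
          simp [hij, hQ]
      rw [Finset.sum_congr rfl hterm, Finset.sum_add_distrib,
        Finset.sum_ite_eq' (Finset.Icc 1 lam) i (fun _ => γ i ^ 2 * (P - Q)),
        if_pos hi]
    rw [Finset.sum_congr rfl hrow, Finset.sum_add_distrib]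
    have : ∑ i ∈ Finset.Icc 1 lam, ∑ j ∈ Finset.Icc 1 lam, γ i * γ j * Q
        = (1 - γ 0) ^ 2 * Q := by
      have : ∀ i ∈ Finset.Icc 1 lam,
          ∑ j ∈ Finset.Icc 1 lam, γ i * γ j * Q = γ i * ((1 - γ 0) * Q) := by
        intro i _
        rw [show (fun j => γ i * γ j * Q) = fun j => γ i * (γ j * Q) from
          funext fun j => by ring, ← Finset.mul_sum, ← Finset.sum_mul, hsum1]
      rw [Finset.sum_congr rfl this, ← Finset.sum_mul, hsum1]; ring
    rw [this]
    have : ∑ i ∈ Finset.Icc 1 lam, γ i ^ 2 * (P - Q) = s * (P - Q) := by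
      rw [← Finset.sum_mul]
    rw [this]
  rw [e1, e2, e3]; ring

/-- `E[p t - p t ^ 2] = (1 - s)^t / 4`. -/
lemma int_var (hsum1 : ∑ i ∈ Finset.Icc 1 lam, γ i = 1 - γ 0) (t : ℕ) :
    ∫ ω, E.p t ω ∂μ - ∫ ω, E.p t ω ^ 2 ∂μ
      = (1 - ∑ i ∈ Finset.Icc 1 lam, γ i ^ 2) ^ t * (1 / 4) := by
  induction t with
  | zero =>
    have h1 : ∫ ω, E.p 0 ω ∂μ = 1 / 2 := by
      rw [integral_congr_ae (g := fun _ => (1 / 2 : ℝ))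
        (by filter_upwards [E.p_zero] with ω h using h)]
      simp
    have h2 : ∫ ω, E.p 0 ω ^ 2 ∂μ = 1 / 4 := by
      rw [integral_congr_ae (g := fun _ => (1 / 4 : ℝ))
        (by filter_upwards [E.p_zero] with ω h; rw [h]; norm_num)]
      simp
    rw [h1, h2]; norm_num
  | succ t ih =>
    rw [int_p_succ E hsum1 t, int_psq_succ E hsum1 t, pow_succ]
    set s := ∑ i ∈ Finset.Icc 1 lam, γ i ^ 2
    have : ∫ ω, E.p t ω ∂μ - ∫ ω, E.p t ω ^ 2 ∂μ = (1 - s) ^ t * (1 / 4) := ih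
    linear_combination (1 - s) * this

lemma var_nonneg (t : ℕ) : 0 ≤ ∫ ω, E.p t ω ∂μ - ∫ ω, E.p t ω ^ 2 ∂μ := by
  rw [← integral_sub (E.integrable t) (psq_int E t)]
  refine integral_nonneg_of_ae ?_
  filter_upwards [E.p_range t] with ω hω
  simp only [Pi.zero_apply]
  nlinarith [hω.1, hω.2]

include E in
lemma one_sub_s_nonneg (hsum1 : ∑ i ∈ Finset.Icc 1 lam, γ i = 1 - γ 0) : 0 ≤ 1 - ∑ i ∈ Finset.Icc 1 lam, γ i ^ 2 := by
  have h := int_var E hsum1 1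
  have h2 := var_nonneg E 1
  rw [h, pow_one] at h2
  linarith

end NBaux

/-- Let `T_L` be the first time the neutral-bit frequency leaves the open
interval `(1/3, 2/3)` (with value `⊤` if it never does).  Then for every
`t ≥ 0`, `P[T_L ≥ t + 1] ≤ (3/2) * (1 - s) ^ t`, where `s = ∑_{i=1}^lam γ i ^ 2`. -/
theorem neutral_bit_leaving_time_tail {Ω : Type*} [MeasurableSpace Ω]
    (μ : Measure Ω) [IsProbabilityMeasure μ]
    (lam : ℕ) (hlam : 1 ≤ lam) (γ : ℕ → ℝ)
    (hsum : ∑ i ∈ Finset.range (lam + 1), γ i = 1)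
    (hnz : ∃ i ∈ Finset.Icc 1 lam, γ i ≠ 0)
    (E : NeutralBitEDA μ lam γ)
    (TL : Ω → ℝ≥0∞)
    (hTL : ∀ ω, TL ω =
      ⨅ (u : ℕ) (_ : E.p u ω ≤ 1 / 3 ∨ 2 / 3 ≤ E.p u ω), (u : ℝ≥0∞))
    (t : ℕ) :
    μ {ω | (t : ℝ≥0∞) + 1 ≤ TL ω}
      ≤ ENNReal.ofReal ((3 / 2) * (1 - ∑ i ∈ Finset.Icc 1 lam, γ i ^ 2) ^ t) := by
  have hsum1 : ∑ i ∈ Finset.Icc 1 lam, γ i = 1 - γ 0 := by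
    have hins : Finset.range (lam + 1) = insert 0 (Finset.Icc 1 lam) := by
      ext a; simp; omega
    rw [hins, Finset.sum_insert (by simp)] at hsum
    linarith
  set s := ∑ i ∈ Finset.Icc 1 lam, γ i ^ 2 with hs
  set A := {ω | (t : ℝ≥0∞) + 1 ≤ TL ω} with hA
  -- characterize A
  have hAeq : A = ⋂ u ∈ Finset.range (t + 1),
      {ω | 1 / 3 < E.p u ω ∧ E.p u ω < 2 / 3} := by
    ext ω
    simp only [hA, Set.mem_setOf_eq, Set.mem_iInter, Finset.mem_range]
    constructor
    · intro h u hu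
      by_contra hcon
      push_neg at hcon
      have hcond : E.p u ω ≤ 1 / 3 ∨ 2 / 3 ≤ E.p u ω := by
        by_cases h13 : E.p u ω ≤ 1 / 3
        · exact Or.inl h13
        · exact Or.inr (hcon (lt_of_not_ge h13))
      have hle : TL ω ≤ (u : ℝ≥0∞) := by
        rw [hTL ω]
        exact iInf_le_of_le u (iInf_le _ hcond)
      have : (t : ℝ≥0∞) + 1 ≤ (u : ℝ≥0∞) := le_trans h hle
      have : ((t + 1 : ℕ) : ℝ≥0∞) ≤ (u : ℝ≥0∞) := by push_cast; exact this
      have := Nat.cast_le (α := ℝ≥0∞) |>.mp this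
      omega
    · intro h
      rw [hTL ω]
      refine le_iInf fun u => le_iInf fun hcond => ?_
      have hu : ¬ u < t + 1 := by
        intro hu
        rcases h u hu with ⟨h1, h2⟩
        rcases hcond with hc | hc <;> linarith
      have : (t + 1 : ℕ) ≤ u := by omega
      calc (t : ℝ≥0∞) + 1 = ((t + 1 : ℕ) : ℝ≥0∞) := by push_cast; ring
      _ ≤ (u : ℝ≥0∞) := Nat.cast_le.mpr this
  have hAmeas : MeasurableSet A := by
    rw [hAeq]
    refine MeasurableSet.biInter (Set.to_countable _) fun u _ => ?_
    have hm : Measurable (E.p u) := (E.adapted u).mono (E.F.le u) le_rfl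
    exact (measurableSet_lt measurable_const hm).inter (measurableSet_lt hm measurable_const)
  -- Markov
  have hfub : ∀ ω ∈ A, (2 / 9 : ℝ) ≤ E.p t ω - E.p t ω ^ 2 := by
    intro ω hω
    rw [hAeq] at hω
    have := Set.mem_iInter.mp hω t
    have h := Set.mem_iInter.mp this (Finset.mem_range.mpr (Nat.lt_succ_self t))
    obtain ⟨h1, h2⟩ := h
    nlinarith
  have hfint : Integrable (fun ω => E.p t ω - E.p t ω ^ 2) μ :=
    (E.integrable t).sub (NBaux.psq_int E t)
  have hfnn : 0 ≤ᵐ[μ] fun ω => E.p t ω - E.p t ω ^ 2 := by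
    filter_upwards [E.p_range t] with ω hω
    simp only [Pi.zero_apply]
    nlinarith [hω.1, hω.2]
  have h1 : (2 / 9 : ℝ) * (μ A).toReal ≤ ∫ ω in A, (E.p t ω - E.p t ω ^ 2) ∂μ :=
    by have := setIntegral_ge_of_const_le hAmeas (measure_ne_top μ A) hfub hfint.integrableOn; rw [smul_eq_mul, mul_comm] at this; exact this
  have h2 : ∫ ω in A, (E.p t ω - E.p t ω ^ 2) ∂μ
      ≤ ∫ ω, (E.p t ω - E.p t ω ^ 2) ∂μ := setIntegral_le_integral hfint hfnn
  have h3 : ∫ ω, (E.p t ω - E.p t ω ^ 2) ∂μ = (1 - s) ^ t * (1 / 4) := by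
    rw [integral_sub (E.integrable t) (NBaux.psq_int E t)]
    exact NBaux.int_var E hsum1 t
  have hpow : (0 : ℝ) ≤ (1 - s) ^ t :=
    pow_nonneg (NBaux.one_sub_s_nonneg E hsum1) t
  have h4 : (μ A).toReal ≤ (3 / 2) * (1 - s) ^ t := by nlinarith [h1, h2, h3]
  calc μ A = ENNReal.ofReal ((μ A).toReal) := (ENNReal.ofReal_toReal (measure_ne_top μ A)).symm
  _ ≤ ENNReal.ofReal ((3 / 2) * (1 - s) ^ t) := ENNReal.ofReal_le_ofReal h4
end

section
/- Let T_L := min{ t ≥ 0 : p_t ≤ 1/3 or p_t ≥ 2/3 } be the first time the neutral-bit frequency leaves the open interval (1/3, 2/3). Then E[T_L] ≤ 3/(2s); in particular E[T_L] = O(1/s). -/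
open MeasureTheory ProbabilityTheory Finset
open scoped ENNReal NNReal

set_option linter.unusedSectionVars false
section Helpers

variable {Ω : Type*} [MeasurableSpace Ω] {μ : Measure Ω} [IsProbabilityMeasure μ]

private lemma bdd_int {f : Ω → ℝ} (hf : AEStronglyMeasurable f μ) {C : ℝ}
    (hC : ∀ᵐ ω ∂μ, |f ω| ≤ C) : Integrable f μ :=
  Integrable.mono' (integrable_const C) hf
    (by filter_upwards [hC] with ω h using by simpa [Real.norm_eq_abs] using h)

variable {lam : ℕ} {γ : ℕ → ℝ} (E : NeutralBitEDA μ lam γ)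

private lemma x_meas (t i : ℕ) (hi : i ∈ Finset.Icc 1 lam) :
    AEStronglyMeasurable (E.x t i) μ :=
  ((E.meas_x t i hi).mono (E.F.le (t + 1))).aestronglyMeasurable

private lemma x_bdd (t i : ℕ) (hi : i ∈ Finset.Icc 1 lam) :
    ∀ᵐ ω ∂μ, |E.x t i ω| ≤ 1 := by
  filter_upwards [E.x_binary t i hi] with ω h
  rcases h with h | h <;> simp [h]

private lemma p_meas (t : ℕ) : AEStronglyMeasurable (E.p t) μ :=
  ((E.adapted t).mono (E.F.le t) le_rfl).aestronglyMeasurable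

private lemma p_bdd (t : ℕ) : ∀ᵐ ω ∂μ, |E.p t ω| ≤ 1 := by
  filter_upwards [E.p_range t] with ω h
  exact abs_le.2 ⟨by linarith [h.1], h.2⟩

private lemma key_integral (t : ℕ) (S : Finset ℕ) (hS : S ⊆ Finset.Icc 1 lam)
    (f : Ω → ℝ) (hf : StronglyMeasurable[E.F t] f) (C : ℝ)
    (hfC : ∀ᵐ ω ∂μ, |f ω| ≤ C) :
    ∫ ω, f ω * ∏ i ∈ S, E.x t i ω ∂μ = ∫ ω, f ω * E.p t ω ^ S.card ∂μ := by
  have hprod : ∀ᵐ ω ∂μ, |∏ i ∈ S, E.x t i ω| ≤ 1 := by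
    have h : ∀ᵐ ω ∂μ, ∀ i ∈ S, |E.x t i ω| ≤ 1 :=
      (Finset.eventually_all S).2 fun i hi => x_bdd E t i (hS hi)
    filter_upwards [h] with ω hω
    rw [Finset.abs_prod]
    exact Finset.prod_le_one (fun i _ => abs_nonneg _) (fun i hi => hω i hi)
  have hgm : AEStronglyMeasurable (fun ω => ∏ i ∈ S, E.x t i ω) μ :=
    ((Finset.stronglyMeasurable_fun_prod S fun i hi => E.meas_x t i (hS hi)).mono
      (E.F.le (t + 1))).aestronglyMeasurable
  have hg_int : Integrable (fun ω => ∏ i ∈ S, E.x t i ω) μ := bdd_int hgm hprod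
  have hfg_int : Integrable (f * fun ω => ∏ i ∈ S, E.x t i ω) μ := by
    refine bdd_int (((hf.mono (E.F.le t)).aestronglyMeasurable).mul hgm) (C := |C|) ?_
    filter_upwards [hfC, hprod] with ω h1 h2
    simp only [Pi.mul_apply]
    rw [abs_mul]
    calc |f ω| * |∏ i ∈ S, E.x t i ω| ≤ |C| * 1 :=
          mul_le_mul (h1.trans (le_abs_self C)) h2 (abs_nonneg _) (abs_nonneg _)
      _ = |C| := mul_one _
  have hmul := condExp_mul_of_stronglyMeasurable_left hf hfg_int hg_int
  calc ∫ ω, f ω * ∏ i ∈ S, E.x t i ω ∂μ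
      = ∫ ω, (μ[f * fun ω => ∏ i ∈ S, E.x t i ω | E.F t]) ω ∂μ :=
        (integral_condExp (E.F.le t)).symm
    _ = ∫ ω, f ω * (μ[fun ω => ∏ i ∈ S, E.x t i ω | E.F t]) ω ∂μ :=
        integral_congr_ae hmul
    _ = ∫ ω, f ω * E.p t ω ^ S.card ∂μ := by
        refine integral_congr_ae ?_
        filter_upwards [E.cond_iid t S hS] with ω h
        rw [h]


private lemma int_mul_bdd {f : Ω → ℝ} (hf : AEStronglyMeasurable f μ) {C : ℝ}
    (hfC : ∀ᵐ ω ∂μ, |f ω| ≤ C) {g : Ω → ℝ} (hg : AEStronglyMeasurable g μ)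
    (hg1 : ∀ᵐ ω ∂μ, |g ω| ≤ 1) : Integrable (fun ω => f ω * g ω) μ := by
  refine bdd_int (hf.mul hg) (C := |C|) ?_
  filter_upwards [hfC, hg1] with ω h1 h2
  rw [abs_mul]
  calc |f ω| * |g ω| ≤ |C| * 1 :=
        mul_le_mul (h1.trans (le_abs_self C)) h2 (abs_nonneg _) (abs_nonneg _)
    _ = |C| := mul_one _

private lemma momentA (hγc : γ 0 + ∑ i ∈ Finset.Icc 1 lam, γ i = 1) (t : ℕ)
    (f : Ω → ℝ) (hf : StronglyMeasurable[E.F t] f) (C : ℝ)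
    (hfC : ∀ᵐ ω ∂μ, |f ω| ≤ C) :
    ∫ ω, f ω * E.p (t + 1) ω ∂μ = ∫ ω, f ω * E.p t ω ∂μ := by
  have hfm : AEStronglyMeasurable f μ := (hf.mono (E.F.le t)).aestronglyMeasurable
  have hxi : ∀ i ∈ Finset.Icc 1 lam,
      ∫ ω, f ω * E.x t i ω ∂μ = ∫ ω, f ω * E.p t ω ∂μ := by
    intro i hi
    have h := key_integral E t {i} (by simpa using hi) f hf C hfC
    simpa using h
  have hfp_int : Integrable (fun ω => f ω * E.p t ω) μ :=
    int_mul_bdd hfm hfC (p_meas E t) (p_bdd E t)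
  have hfx_int : ∀ i ∈ Finset.Icc 1 lam, Integrable (fun ω => f ω * E.x t i ω) μ :=
    fun i hi => int_mul_bdd hfm hfC (x_meas E t i hi) (x_bdd E t i hi)
  have hstep : ∫ ω, f ω * E.p (t + 1) ω ∂μ
      = ∫ ω, (γ 0 * (f ω * E.p t ω)
          + ∑ i ∈ Finset.Icc 1 lam, γ i * (f ω * E.x t i ω)) ∂μ := by
    refine integral_congr_ae ?_
    filter_upwards [E.update t] with ω hω
    rw [hω]
    simp only [mul_add, Finset.mul_sum]
    exact congrArg₂ (· + ·) (by ring) (Finset.sum_congr rfl fun i _ => by ring)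
  rw [hstep, integral_add (hfp_int.const_mul _)
      (integrable_finset_sum _ fun i hi => (hfx_int i hi).const_mul _),
    integral_finset_sum _ (fun i hi => (hfx_int i hi).const_mul _)]
  simp only [integral_const_mul]
  rw [Finset.sum_congr rfl fun i hi => by rw [hxi i hi], ← Finset.sum_mul, ← add_mul, hγc,
    one_mul]


private lemma diag_sum (I : Finset ℕ) (g : ℕ → ℝ) (Q1 Q2 : ℝ) :
    ∑ i ∈ I, ∑ j ∈ I, (g i * g j) * (if i = j then Q1 else Q2)
      = ((∑ i ∈ I, g i) ^ 2 - ∑ i ∈ I, g i ^ 2) * Q2 + (∑ i ∈ I, g i ^ 2) * Q1 := by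
  classical
  have h1 : ∀ i ∈ I, ∑ j ∈ I, (g i * g j) * (if i = j then Q1 else Q2)
      = (∑ j ∈ I, (g i * g j) * Q2) + g i ^ 2 * (Q1 - Q2) := by
    intro i hi
    have hterm : ∀ j ∈ I, (g i * g j) * (if i = j then Q1 else Q2)
        = (g i * g j) * Q2 + (if i = j then g i * g j * (Q1 - Q2) else 0) := by
      intro j _
      by_cases h : i = j
      · subst h; rw [if_pos rfl, if_pos rfl]; ring
      · simp [h]
    rw [Finset.sum_congr rfl hterm, Finset.sum_add_distrib,
      Finset.sum_ite_eq I i (fun j => g i * g j * (Q1 - Q2)), if_pos hi]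
    ring
  rw [Finset.sum_congr rfl h1, Finset.sum_add_distrib]
  have h2 : ∑ i ∈ I, ∑ j ∈ I, (g i * g j) * Q2 = (∑ i ∈ I, g i) ^ 2 * Q2 := by
    rw [sq, Finset.sum_mul_sum, Finset.sum_mul]
    exact Finset.sum_congr rfl fun i _ => (Finset.sum_mul _ _ _).symm
  have h3 : ∑ i ∈ I, g i ^ 2 * (Q1 - Q2) = (∑ i ∈ I, g i ^ 2) * (Q1 - Q2) :=
    (Finset.sum_mul _ _ _).symm
  rw [h2, h3]
  ring


private lemma momentB (hγc : γ 0 + ∑ i ∈ Finset.Icc 1 lam, γ i = 1) (t : ℕ)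
    (f : Ω → ℝ) (hf : StronglyMeasurable[E.F t] f) (C : ℝ)
    (hfC : ∀ᵐ ω ∂μ, |f ω| ≤ C) :
    ∫ ω, f ω * E.p (t + 1) ω ^ 2 ∂μ
      = (1 - ∑ i ∈ Finset.Icc 1 lam, γ i ^ 2) * ∫ ω, f ω * E.p t ω ^ 2 ∂μ
        + (∑ i ∈ Finset.Icc 1 lam, γ i ^ 2) * ∫ ω, f ω * E.p t ω ∂μ := by
  classical
  set I := Finset.Icc 1 lam with hI
  set Q1 : ℝ := ∫ ω, f ω * E.p t ω ∂μ with hQ1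
  set Q2 : ℝ := ∫ ω, f ω * E.p t ω ^ 2 ∂μ with hQ2
  have hfm : AEStronglyMeasurable f μ := (hf.mono (E.F.le t)).aestronglyMeasurable
  have hfpm : AEStronglyMeasurable (fun ω => f ω * E.p t ω) μ := hfm.mul (p_meas E t)
  have hfpC : ∀ᵐ ω ∂μ, |f ω * E.p t ω| ≤ |C| := by
    filter_upwards [hfC, p_bdd E t] with ω h1 h2
    rw [abs_mul]
    calc |f ω| * |E.p t ω| ≤ |C| * 1 :=
          mul_le_mul (h1.trans (le_abs_self C)) h2 (abs_nonneg _) (abs_nonneg _)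
      _ = |C| := mul_one _
  -- the three moment identities
  have hb : ∀ i ∈ I, ∫ ω, (f ω * E.p t ω) * E.x t i ω ∂μ = Q2 := by
    intro i hi
    have h := key_integral E t {i} (by simpa [hI] using hi)
      (fun ω => f ω * E.p t ω) (hf.mul (E.adapted t).stronglyMeasurable) |C| hfpC
    simp only [Finset.prod_singleton, Finset.card_singleton, pow_one] at h
    rw [h, hQ2]
    exact integral_congr_ae (Filter.Eventually.of_forall fun ω => by ring)
  have hxx : ∀ i ∈ I, ∀ j ∈ I,
      ∫ ω, f ω * (E.x t i ω * E.x t j ω) ∂μ = if i = j then Q1 else Q2 := by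
    intro i hi j hj
    by_cases hij : i = j
    · subst hij
      rw [if_pos rfl]
      have h1 : ∫ ω, f ω * (E.x t i ω * E.x t i ω) ∂μ = ∫ ω, f ω * E.x t i ω ∂μ := by
        refine integral_congr_ae ?_
        filter_upwards [E.x_binary t i (by simpa [hI] using hi)] with ω h
        rcases h with h | h <;> rw [h] <;> ring
      have h2 := key_integral E t {i} (by simpa [hI] using hi) f hf C hfC
      simp only [Finset.prod_singleton, Finset.card_singleton, pow_one] at h2
      rw [h1, h2]
    · rw [if_neg hij]
      have h2 := key_integral E t {i, j} (by
        intro a ha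
        simp only [Finset.mem_insert, Finset.mem_singleton] at ha
        rcases ha with rfl | rfl
        · simpa [hI] using hi
        · simpa [hI] using hj) f hf C hfC
      simp only [Finset.prod_pair hij, Finset.card_pair hij] at h2
      exact h2
  -- integrabilities
  have hfp2_int : Integrable (fun ω => f ω * E.p t ω ^ 2) μ := by
    refine int_mul_bdd hfm hfC ((p_meas E t).mul (p_meas E t) |>.congr ?_) ?_
    · exact Filter.Eventually.of_forall fun ω => (sq (E.p t ω)).symm
    · filter_upwards [p_bdd E t] with ω h
      rw [abs_pow]
      calc |E.p t ω| ^ 2 ≤ 1 ^ 2 := pow_le_pow_left₀ (abs_nonneg _) h 2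
        _ = 1 := one_pow 2
  have hfpx_int : ∀ i ∈ I, Integrable (fun ω => (f ω * E.p t ω) * E.x t i ω) μ :=
    fun i hi => int_mul_bdd hfpm hfpC (x_meas E t i (by simpa [hI] using hi))
      (x_bdd E t i (by simpa [hI] using hi))
  have hfxx_int : ∀ i ∈ I, ∀ j ∈ I,
      Integrable (fun ω => f ω * (E.x t i ω * E.x t j ω)) μ := by
    intro i hi j hj
    refine int_mul_bdd hfm hfC
      ((x_meas E t i (by simpa [hI] using hi)).mul (x_meas E t j (by simpa [hI] using hj))) ?_
    filter_upwards [x_bdd E t i (by simpa [hI] using hi),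
      x_bdd E t j (by simpa [hI] using hj)] with ω h1 h2
    rw [abs_mul]
    calc |E.x t i ω| * |E.x t j ω| ≤ 1 * 1 :=
          mul_le_mul h1 h2 (abs_nonneg _) zero_le_one
      _ = 1 := mul_one 1
  -- pointwise expansion
  have hstep : ∫ ω, f ω * E.p (t + 1) ω ^ 2 ∂μ
      = ∫ ω, (γ 0 ^ 2 * (f ω * E.p t ω ^ 2)
          + ∑ i ∈ I, (2 * γ 0 * γ i) * ((f ω * E.p t ω) * E.x t i ω)
          + ∑ i ∈ I, ∑ j ∈ I, (γ i * γ j) * (f ω * (E.x t i ω * E.x t j ω))) ∂μ := by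
    refine integral_congr_ae ?_
    filter_upwards [E.update t] with ω hω
    rw [hω]
    have hB : (∑ i ∈ I, (2 * γ 0 * γ i) * ((f ω * E.p t ω) * E.x t i ω))
        = f ω * (2 * (γ 0 * E.p t ω) * ∑ i ∈ I, γ i * E.x t i ω) := by
      simp only [Finset.mul_sum]
      exact Finset.sum_congr rfl fun i _ => by ring
    have hC : (∑ i ∈ I, ∑ j ∈ I, (γ i * γ j) * (f ω * (E.x t i ω * E.x t j ω)))
        = f ω * (∑ i ∈ I, γ i * E.x t i ω) ^ 2 := by
      rw [sq, Finset.sum_mul_sum]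
      simp only [Finset.mul_sum]
      exact Finset.sum_congr rfl fun i _ => Finset.sum_congr rfl fun j _ => by ring
    rw [hB, hC]
    ring
  have hA : Integrable (fun ω => γ 0 ^ 2 * (f ω * E.p t ω ^ 2)) μ :=
    hfp2_int.const_mul _
  have hBint : Integrable
      (fun ω => ∑ i ∈ I, (2 * γ 0 * γ i) * ((f ω * E.p t ω) * E.x t i ω)) μ :=
    integrable_finset_sum _ fun i hi => (hfpx_int i hi).const_mul _
  have hCint : Integrable
      (fun ω => ∑ i ∈ I, ∑ j ∈ I, (γ i * γ j) * (f ω * (E.x t i ω * E.x t j ω))) μ :=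
    integrable_finset_sum _ fun i hi =>
      integrable_finset_sum _ fun j hj => (hfxx_int i hi j hj).const_mul _
  have hABint : Integrable (fun ω => γ 0 ^ 2 * (f ω * E.p t ω ^ 2)
      + ∑ i ∈ I, (2 * γ 0 * γ i) * ((f ω * E.p t ω) * E.x t i ω)) μ := hA.add hBint
  rw [hstep, integral_add hABint hCint, integral_add hA hBint,
    integral_finset_sum _ (fun i hi => (hfpx_int i hi).const_mul _),
    integral_finset_sum _ (fun i hi =>
      integrable_finset_sum _ fun j hj => (hfxx_int i hi j hj).const_mul _)]
  have h4 : ∀ i ∈ I, ∫ ω, ∑ j ∈ I, (γ i * γ j) * (f ω * (E.x t i ω * E.x t j ω)) ∂μ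
      = ∑ j ∈ I, (γ i * γ j) * ∫ ω, f ω * (E.x t i ω * E.x t j ω) ∂μ := by
    intro i hi
    rw [integral_finset_sum _ fun j hj => (hfxx_int i hi j hj).const_mul _]
    simp only [integral_const_mul]
  rw [Finset.sum_congr rfl h4]
  simp only [integral_const_mul]
  have e1 : ∑ i ∈ I, (2 * γ 0 * γ i) * ∫ ω, (f ω * E.p t ω) * E.x t i ω ∂μ
      = 2 * γ 0 * (∑ i ∈ I, γ i) * Q2 := by
    rw [Finset.sum_congr rfl fun i hi => by rw [hb i hi]]
    rw [Finset.sum_congr rfl fun i _ => show (2 * γ 0 * γ i) * Q2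
      = γ i * (2 * γ 0 * Q2) from by ring, ← Finset.sum_mul]
    ring
  have e2 : ∑ i ∈ I, ∑ j ∈ I,
      (γ i * γ j) * ∫ ω, (fun ω => ∫ ω', 0 ∂μ) ω ∂μ = 0 := by simp
  have e3 : ∑ i ∈ I, ∑ j ∈ I, (γ i * γ j) * ∫ ω, f ω * (E.x t i ω * E.x t j ω) ∂μ
      = ((∑ i ∈ I, γ i) ^ 2 - ∑ i ∈ I, γ i ^ 2) * Q2 + (∑ i ∈ I, γ i ^ 2) * Q1 := by
    rw [Finset.sum_congr rfl fun i hi => Finset.sum_congr rfl fun j hj => by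
      rw [hxx i hi j hj]]
    exact diag_sum I γ Q1 Q2
  rw [e1, e3]
  have hs : γ 0 = 1 - ∑ i ∈ I, γ i := by linarith [hγc]
  rw [hs]
  ring

end Helpers


/-- Let `T_L` be the first time the neutral-bit frequency leaves the open
interval `(1/3, 2/3)` (with value `⊤` if it never does).  Then
`E[T_L] ≤ 3 / (2 s)`, where `s = ∑_{i=1}^lam γ i ^ 2`; in particular
`E[T_L] = O(1/s)`. -/
theorem neutral_bit_leaving_time_expectation {Ω : Type*} [MeasurableSpace Ω]
    (μ : Measure Ω) [IsProbabilityMeasure μ]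
    (lam : ℕ) (hlam : 1 ≤ lam) (γ : ℕ → ℝ)
    (hsum : ∑ i ∈ Finset.range (lam + 1), γ i = 1)
    (hnz : ∃ i ∈ Finset.Icc 1 lam, γ i ≠ 0)
    (E : NeutralBitEDA μ lam γ)
    (TL : Ω → ℝ≥0∞)
    (hTL : ∀ ω, TL ω =
      ⨅ (u : ℕ) (_ : E.p u ω ≤ 1 / 3 ∨ 2 / 3 ≤ E.p u ω), (u : ℝ≥0∞)) :
    ∫⁻ ω, TL ω ∂μ
      ≤ ENNReal.ofReal (3 / (2 * ∑ i ∈ Finset.Icc 1 lam, γ i ^ 2)) := by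
  classical
  obtain ⟨i0, hi0mem, hi0⟩ := hnz
  set s : ℝ := ∑ i ∈ Finset.Icc 1 lam, γ i ^ 2 with hs_def
  have hs_pos : 0 < s :=
    Finset.sum_pos' (fun i _ => sq_nonneg _) ⟨i0, hi0mem, by positivity⟩
  have hsplit : Finset.range (lam + 1) = insert 0 (Finset.Icc 1 lam) := by
    ext i
    simp only [Finset.mem_range, Finset.mem_insert, Finset.mem_Icc]
    omega
  have hγc : γ 0 + ∑ i ∈ Finset.Icc 1 lam, γ i = 1 := by
    rw [← hsum, hsplit, Finset.sum_insert (by simp)]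
  -- survival sets
  set A : ℕ → Set Ω := fun t => {ω | ∀ u ≤ t, 1 / 3 < E.p u ω ∧ E.p u ω < 2 / 3} with hA
  have hAmeasF : ∀ t, MeasurableSet[E.F t] (A t) := by
    intro t
    have h1 : A t = ⋂ (u : ℕ) (_ : u ≤ t), E.p u ⁻¹' Set.Ioo (1 / 3 : ℝ) (2 / 3) := by
      ext ω
      simp [hA, Set.mem_Ioo]
    rw [h1]
    exact MeasurableSet.iInter fun u => MeasurableSet.iInter fun hu =>
      ((E.adapted u).mono (E.F.mono hu) le_rfl) measurableSet_Ioo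
  have hAmeas : ∀ t, MeasurableSet (A t) := fun t => E.F.le t _ (hAmeasF t)
  have hAanti : ∀ t, A (t + 1) ⊆ A t := by
    intro t ω hω
    simp only [hA, Set.mem_setOf_eq] at hω ⊢
    exact fun u hu => hω u (hu.trans t.le_succ)
  set ind : ℕ → Ω → ℝ := fun t => (A t).indicator (fun _ => (1 : ℝ)) with hind
  have hind01 : ∀ t ω, ind t ω = 0 ∨ ind t ω = 1 := by
    intro t ω
    by_cases h : ω ∈ A t
    · right; simp [hind, Set.indicator_of_mem h]
    · left; simp [hind, Set.indicator_of_notMem h]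
  have hind_nonneg : ∀ t ω, 0 ≤ ind t ω := by
    intro t ω; rcases hind01 t ω with h | h <;> rw [h] <;> norm_num
  have hind_le : ∀ t, ∀ᵐ ω ∂μ, |ind t ω| ≤ 1 := by
    intro t
    refine Filter.Eventually.of_forall fun ω => ?_
    rcases hind01 t ω with h | h <;> rw [h] <;> norm_num
  have hindSM : ∀ t, StronglyMeasurable[E.F t] (ind t) := fun t =>
    stronglyMeasurable_const.indicator (hAmeasF t)
  have hindm : ∀ t, AEStronglyMeasurable (ind t) μ := fun t =>
    ((hindSM t).mono (E.F.le t)).aestronglyMeasurable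
  set m : ℕ → ℝ := fun t => (μ (A t)).toReal with hm
  set D : ℕ → ℝ := fun t => ∫ ω, ind t ω * (E.p t ω - E.p t ω ^ 2) ∂μ with hD
  -- basic measurability / integrability facts
  have hp2_meas : ∀ t, AEStronglyMeasurable (fun ω => E.p t ω ^ 2) μ := fun t =>
    ((p_meas E t).mul (p_meas E t)).congr
      (Filter.Eventually.of_forall fun ω => (sq (E.p t ω)).symm)
  have hp2_bdd : ∀ t, ∀ᵐ ω ∂μ, |E.p t ω ^ 2| ≤ 1 := by
    intro t
    filter_upwards [p_bdd E t] with ω h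
    rw [abs_pow]
    calc |E.p t ω| ^ 2 ≤ 1 ^ 2 := pow_le_pow_left₀ (abs_nonneg _) h 2
      _ = 1 := one_pow 2
  have hg_bdd : ∀ t, ∀ᵐ ω ∂μ, |E.p t ω - E.p t ω ^ 2| ≤ 1 := by
    intro t
    filter_upwards [E.p_range t] with ω h
    rw [abs_le]
    constructor <;> nlinarith [h.1, h.2]
  have hg_meas : ∀ t, AEStronglyMeasurable (fun ω => E.p t ω - E.p t ω ^ 2) μ :=
    fun t => (p_meas E t).sub (hp2_meas t)
  have hind_int : ∀ t, Integrable (ind t) μ := fun t => bdd_int (hindm t) (hind_le t)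
  have hDint : ∀ t t', Integrable (fun ω => ind t ω * (E.p t' ω - E.p t' ω ^ 2)) μ :=
    fun t t' => int_mul_bdd (hindm t) (hind_le t) (hg_meas t') (hg_bdd t')
  have hipint : ∀ t t', Integrable (fun ω => ind t ω * E.p t' ω) μ :=
    fun t t' => int_mul_bdd (hindm t) (hind_le t) (p_meas E t') (p_bdd E t')
  have hip2int : ∀ t t', Integrable (fun ω => ind t ω * E.p t' ω ^ 2) μ :=
    fun t t' => int_mul_bdd (hindm t) (hind_le t) (hp2_meas t') (hp2_bdd t')
  have hm_eq : ∀ t, ∫ ω, ind t ω ∂μ = m t := by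
    intro t
    simp only [hind, hm]
    rw [MeasureTheory.integral_indicator_const (1 : ℝ) (hAmeas t), smul_eq_mul, mul_one, measureReal_def]
  -- lower bound on the potential on the survival set
  have hDlow : ∀ t, 2 / 9 * m t ≤ D t := by
    intro t
    have hp : ∀ ω, 2 / 9 * ind t ω ≤ ind t ω * (E.p t ω - E.p t ω ^ 2) := by
      intro ω
      by_cases h : ω ∈ A t
      · have hpt : 1 / 3 < E.p t ω ∧ E.p t ω < 2 / 3 := by
          have h' := h
          simp only [hA, Set.mem_setOf_eq] at h'
          exact h' t le_rfl
        have h1 : ind t ω = 1 := by simp [hind, Set.indicator_of_mem h]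
        rw [h1]
        nlinarith [hpt.1, hpt.2]
      · have h0 : ind t ω = 0 := by simp [hind, Set.indicator_of_notMem h]
        rw [h0]
        norm_num
    calc 2 / 9 * m t = ∫ ω, 2 / 9 * ind t ω ∂μ := by
          rw [integral_const_mul, hm_eq t]
      _ ≤ D t := integral_mono ((hind_int t).const_mul _) (hDint t t) hp
  have hDnonneg : ∀ t, 0 ≤ D t := by
    intro t
    refine integral_nonneg_of_ae ?_
    filter_upwards [E.p_range t] with ω h
    exact mul_nonneg (hind_nonneg t ω) (by nlinarith [h.1, h.2])
  have hD0 : D 0 ≤ 1 / 4 := by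
    have hae : ∀ᵐ ω ∂μ, ind 0 ω * (E.p 0 ω - E.p 0 ω ^ 2) ≤ 1 / 4 := by
      filter_upwards [E.p_zero] with ω h
      rw [h]
      rcases hind01 0 ω with h0 | h0 <;> rw [h0] <;> norm_num
    calc D 0 ≤ ∫ _ω, (1 / 4 : ℝ) ∂μ := integral_mono_ae (hDint 0 0) (integrable_const _) hae
      _ = 1 / 4 := by simp
  -- drift step
  have hstep : ∀ t, D (t + 1) ≤ D t - 2 * s / 9 * m t := by
    intro t
    have h1 : ∫ ω, ind t ω * (E.p (t + 1) ω - E.p (t + 1) ω ^ 2) ∂μ = (1 - s) * D t := by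
      have hsub : ∫ ω, ind t ω * (E.p (t + 1) ω - E.p (t + 1) ω ^ 2) ∂μ
          = (∫ ω, ind t ω * E.p (t + 1) ω ∂μ) - ∫ ω, ind t ω * E.p (t + 1) ω ^ 2 ∂μ := by
        rw [← integral_sub (hipint t (t + 1)) (hip2int t (t + 1))]
        exact integral_congr_ae (Filter.Eventually.of_forall fun ω => by ring)
      have hD' : D t = (∫ ω, ind t ω * E.p t ω ∂μ) - ∫ ω, ind t ω * E.p t ω ^ 2 ∂μ := by
        rw [hD, ← integral_sub (hipint t t) (hip2int t t)]
        exact integral_congr_ae (Filter.Eventually.of_forall fun ω => by ring)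
      rw [hsub, momentA E hγc t (ind t) (hindSM t) 1 (hind_le t),
        momentB E hγc t (ind t) (hindSM t) 1 (hind_le t), ← hs_def, hD']
      ring
    have h2 : D (t + 1) ≤ ∫ ω, ind t ω * (E.p (t + 1) ω - E.p (t + 1) ω ^ 2) ∂μ := by
      refine integral_mono_ae (hDint (t + 1) (t + 1)) (hDint t (t + 1)) ?_
      filter_upwards [E.p_range (t + 1)] with ω h
      have hnn : 0 ≤ E.p (t + 1) ω - E.p (t + 1) ω ^ 2 := by nlinarith [h.1, h.2]
      refine mul_le_mul_of_nonneg_right ?_ hnn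
      by_cases hmem : ω ∈ A (t + 1)
      · have e1 : ind (t + 1) ω = 1 := by simp [hind, Set.indicator_of_mem hmem]
        have e2 : ind t ω = 1 := by simp [hind, Set.indicator_of_mem (hAanti t hmem)]
        rw [e1, e2]
      · have e1 : ind (t + 1) ω = 0 := by simp [hind, Set.indicator_of_notMem hmem]
        rw [e1]
        exact hind_nonneg t ω
    have h3 := hDlow t
    have h4 : s * (2 / 9 * m t) ≤ s * D t := mul_le_mul_of_nonneg_left h3 hs_pos.le
    have h5 : D (t + 1) ≤ (1 - s) * D t := h2.trans (le_of_eq h1)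
    nlinarith [h4, h5]
  -- telescoping
  have hsum_le : ∀ n, D n + 2 * s / 9 * ∑ t ∈ Finset.range n, m t ≤ D 0 := by
    intro n
    induction n with
    | zero => simp
    | succ n ih =>
      rw [Finset.sum_range_succ]
      have expand : 2 * s / 9 * (∑ t ∈ Finset.range n, m t + m n)
          = 2 * s / 9 * ∑ t ∈ Finset.range n, m t + 2 * s / 9 * m n := by ring
      rw [expand]
      linarith [hstep n, ih]
  have hm_sum : ∀ n, ∑ t ∈ Finset.range n, m t ≤ 3 / (2 * s) := by
    intro n
    have h1 : 2 * s / 9 * ∑ t ∈ Finset.range n, m t ≤ 1 / 4 := by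
      linarith [hsum_le n, hDnonneg n, hD0]
    rw [le_div_iff₀ (by positivity)]
    nlinarith [h1]
  -- pass to the lintegral
  have hTL_le : ∀ ω, TL ω ≤ ∑' t, (A t).indicator (fun _ => (1 : ℝ≥0∞)) ω := by
    intro ω
    rw [hTL ω]
    by_cases hex : ∃ u : ℕ, E.p u ω ≤ 1 / 3 ∨ 2 / 3 ≤ E.p u ω
    · have h1 : (⨅ (u : ℕ) (_ : E.p u ω ≤ 1 / 3 ∨ 2 / 3 ≤ E.p u ω), (u : ℝ≥0∞))
          ≤ (Nat.find hex : ℝ≥0∞) := iInf₂_le (Nat.find hex) (Nat.find_spec hex)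
      refine h1.trans ?_
      have hmem : ∀ t, t < Nat.find hex → ω ∈ A t := by
        intro t ht
        simp only [hA, Set.mem_setOf_eq]
        intro u hu
        have h2 := Nat.find_min hex (lt_of_le_of_lt hu ht)
        push_neg at h2
        exact h2
      calc (Nat.find hex : ℝ≥0∞)
          = ∑ t ∈ Finset.range (Nat.find hex), (A t).indicator (fun _ => (1 : ℝ≥0∞)) ω := by
            rw [Finset.sum_congr rfl fun t ht =>
              Set.indicator_of_mem (hmem t (Finset.mem_range.1 ht)) _]
            simp
        _ ≤ _ := ENNReal.sum_le_tsum _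
    · push_neg at hex
      have hmem : ∀ t, ω ∈ A t := by
        intro t
        simp only [hA, Set.mem_setOf_eq]
        intro u _
        exact hex u
      have htop : (∑' t, (A t).indicator (fun _ => (1 : ℝ≥0∞)) ω) = ⊤ := by
        rw [tsum_congr fun t => Set.indicator_of_mem (hmem t) _]
        exact ENNReal.tsum_const_eq_top_of_ne_zero one_ne_zero
      rw [htop]
      exact le_top
  calc ∫⁻ ω, TL ω ∂μ
      ≤ ∫⁻ ω, ∑' t, (A t).indicator (fun _ => (1 : ℝ≥0∞)) ω ∂μ := lintegral_mono hTL_le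
    _ = ∑' t, ∫⁻ ω, (A t).indicator (fun _ => (1 : ℝ≥0∞)) ω ∂μ :=
        lintegral_tsum fun t => (measurable_const.indicator (hAmeas t)).aemeasurable
    _ = ∑' t, μ (A t) := by
        refine tsum_congr fun t => ?_
        rw [lintegral_indicator_const (hAmeas t), one_mul]
    _ ≤ ENNReal.ofReal (3 / (2 * s)) := by
        have hbound : ∀ n, ∑ t ∈ Finset.range n, μ (A t) ≤ ENNReal.ofReal (3 / (2 * s)) := by
          intro n
          have h1 : ∑ t ∈ Finset.range n, μ (A t)
              = ENNReal.ofReal (∑ t ∈ Finset.range n, m t) := by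
            rw [ENNReal.ofReal_sum_of_nonneg (fun i _ => by
              simp only [hm]; exact ENNReal.toReal_nonneg)]
            refine Finset.sum_congr rfl fun t _ => ?_
            simp only [hm]
            exact (ENNReal.ofReal_toReal (measure_ne_top μ _)).symm
          rw [h1]
          exact ENNReal.ofReal_le_ofReal (hm_sum n)
        rw [ENNReal.tsum_eq_iSup_sum]
        refine iSup_le fun S => ?_
        obtain ⟨n, hn⟩ := S.exists_nat_subset_range
        exact (Finset.sum_le_sum_of_subset hn).trans (hbound n)
end

section
/- For every integer T ≥ 1 and every δ > 0, the neutral-bit frequency process satisfies P[ |p_t − 1/2| < δ for all t ∈ {0, 1, …, T} ] ≥ 1 − 2·exp( −δ² / (2 T s) ). -/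
open MeasureTheory ProbabilityTheory Finset
open scoped ENNReal NNReal

/-! ### Auxiliary pointwise inequalities -/

lemma NBaux.exp_convex {a q : ℝ} (hq0 : 0 ≤ q) (hq1 : q ≤ 1) :
    Real.exp (a * q) ≤ 1 + (Real.exp a - 1) * q := by
  have h := convexOn_exp.2 (Set.mem_univ (0:ℝ)) (Set.mem_univ a)
    (by linarith : (0:ℝ) ≤ 1 - q) hq0 (by ring)
  simp only [smul_eq_mul, mul_zero, Real.exp_zero] at h
  calc Real.exp (a * q) = Real.exp ((1-q) * 0 + q * a) := by ring_nf
    _ ≤ (1-q) * 1 + q * Real.exp a := by simpa using h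
    _ = 1 + (Real.exp a - 1) * q := by ring

lemma NBaux.one_le_factor {a q : ℝ} (hq0 : 0 ≤ q) (hq1 : q ≤ 1) :
    1 ≤ Real.exp (-(a * q)) * (1 + (Real.exp a - 1) * q) := by
  have h := NBaux.exp_convex (a := a) hq0 hq1
  have he : 0 < Real.exp (-(a*q)) := Real.exp_pos _
  have hu : Real.exp (-(a*q)) * Real.exp (a*q) = 1 := by
    rw [← Real.exp_add]; simp
  nlinarith [mul_le_mul_of_nonneg_left h he.le]

lemma NBaux.factor_le {a q : ℝ} (hq0 : 0 ≤ q) (hq1 : q ≤ 1) :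
    Real.exp (-(a * q)) * (1 + (Real.exp a - 1) * q) ≤ Real.exp (a ^ 2 / 2) := by
  have h1 : Real.exp (-(a*q)) ≤ (1-q)/2 * Real.exp a + (1+q)/2 * Real.exp (-a) := by
    have h := convexOn_exp.2 (Set.mem_univ a) (Set.mem_univ (-a))
      (by linarith : (0:ℝ) ≤ (1-q)/2) (by linarith : (0:ℝ) ≤ (1+q)/2) (by ring)
    simp only [smul_eq_mul] at h
    calc Real.exp (-(a*q)) = Real.exp ((1-q)/2 * a + (1+q)/2 * (-a)) := by ring_nf
      _ ≤ _ := h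
  have h2 : Real.exp (a*(1-q)) ≤ (1-q/2) * Real.exp a + (q/2) * Real.exp (-a) := by
    have h := convexOn_exp.2 (Set.mem_univ a) (Set.mem_univ (-a))
      (by linarith : (0:ℝ) ≤ 1-q/2) (by linarith : (0:ℝ) ≤ q/2) (by ring)
    simp only [smul_eq_mul] at h
    calc Real.exp (a*(1-q)) = Real.exp ((1-q/2) * a + q/2 * (-a)) := by ring_nf
      _ ≤ _ := h
  have hcosh : Real.cosh a ≤ Real.exp (a^2/2) := Real.cosh_le_exp_half_sq a
  have hch : Real.cosh a = (Real.exp a + Real.exp (-a))/2 := Real.cosh_eq a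
  have hsplit : Real.exp (-(a * q)) * (1 + (Real.exp a - 1) * q)
      = (1-q) * Real.exp (-(a*q)) + q * Real.exp (a*(1-q)) := by
    have he : Real.exp (a*(1-q)) = Real.exp a * Real.exp (-(a*q)) := by
      rw [← Real.exp_add]; ring_nf
    rw [he]; ring
  nlinarith [mul_le_mul_of_nonneg_left h1 (by linarith : (0:ℝ) ≤ 1-q),
    mul_le_mul_of_nonneg_left h2 hq0]

/-! ### Conditional expectation computations -/

namespace NeutralBitEDA

variable {Ω : Type*} [MeasurableSpace Ω] {μ : Measure Ω} [IsProbabilityMeasure μ]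
  {lam : ℕ} {γ : ℕ → ℝ} (E : NeutralBitEDA μ lam γ)

lemma integrable_prod_x (t : ℕ) (S : Finset ℕ) (hS : S ⊆ Finset.Icc 1 lam) :
    Integrable (fun ω => ∏ i ∈ S, E.x t i ω) μ := by
  have hmeas : StronglyMeasurable (fun ω => ∏ i ∈ S, E.x t i ω) := by
    apply Finset.stronglyMeasurable_fun_prod
    exact fun i hi => ((E.meas_x t i (hS hi)).mono (E.F.le _))
  have hbd : ∀ᵐ ω ∂μ, ‖∏ i ∈ S, E.x t i ω‖ ≤ 1 := by
    have h : ∀ᵐ ω ∂μ, ∀ i ∈ S, E.x t i ω = 0 ∨ E.x t i ω = 1 := by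
      rw [Filter.eventually_all_finset]
      exact fun i hi => E.x_binary t i (hS hi)
    filter_upwards [h] with ω hω
    rw [Real.norm_eq_abs, abs_le]
    constructor
    · have : (0:ℝ) ≤ ∏ i ∈ S, E.x t i ω :=
        Finset.prod_nonneg fun i hi => by rcases hω i hi with h|h <;> simp [h]
      linarith
    · exact Finset.prod_le_one (fun i hi => by rcases hω i hi with h|h <;> simp [h])
        (fun i hi => by rcases hω i hi with h|h <;> simp [h])
  exact Integrable.mono' (integrable_const 1) hmeas.aestronglyMeasurable hbd

lemma condexp_prod_one_add (t : ℕ) (b : ℕ → ℝ) :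
    μ[(fun ω => ∏ i ∈ Finset.Icc 1 lam, (1 + b i * E.x t i ω)) | E.F t] =ᵐ[μ]
      fun ω => ∏ i ∈ Finset.Icc 1 lam, (1 + b i * E.p t ω) := by
  have hexpand : (fun ω => ∏ i ∈ Finset.Icc 1 lam, (1 + b i * E.x t i ω))
      = ∑ S ∈ (Finset.Icc 1 lam).powerset,
          (∏ i ∈ S, b i) • (fun ω => ∏ i ∈ S, E.x t i ω) := by
    funext ω
    rw [Finset.sum_apply]
    simp only [Pi.smul_apply, smul_eq_mul]
    calc ∏ i ∈ Finset.Icc 1 lam, (1 + b i * E.x t i ω)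
        = ∏ i ∈ Finset.Icc 1 lam, (b i * E.x t i ω + 1) := by
          apply Finset.prod_congr rfl; intros; ring
      _ = ∑ S ∈ (Finset.Icc 1 lam).powerset,
            (∏ i ∈ S, (b i * E.x t i ω)) * ∏ i ∈ (Finset.Icc 1 lam) \ S, 1 :=
          Finset.prod_add _ _ _
      _ = ∑ S ∈ (Finset.Icc 1 lam).powerset, (∏ i ∈ S, b i) * ∏ i ∈ S, E.x t i ω := by
          apply Finset.sum_congr rfl; intro S _
          rw [Finset.prod_const_one, mul_one, Finset.prod_mul_distrib]
  rw [hexpand]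
  have hint : ∀ S ∈ (Finset.Icc 1 lam).powerset,
      Integrable ((∏ i ∈ S, b i) • (fun ω => ∏ i ∈ S, E.x t i ω)) μ :=
    fun S hS => (E.integrable_prod_x t S (Finset.mem_powerset.mp hS)).smul _
  refine (condExp_finset_sum hint _).trans ?_
  have hterm : ∀ S ∈ (Finset.Icc 1 lam).powerset,
      μ[(∏ i ∈ S, b i) • (fun ω => ∏ i ∈ S, E.x t i ω) | E.F t] =ᵐ[μ]
        fun ω => (∏ i ∈ S, b i) * E.p t ω ^ S.card := by
    intro S hS
    refine (condExp_smul _ _ _).trans ?_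
    filter_upwards [E.cond_iid t S (Finset.mem_powerset.mp hS)] with ω hω
    simp only [Pi.smul_apply, smul_eq_mul, hω]
  have hae : ∀ᵐ ω ∂μ, ∀ S ∈ (Finset.Icc 1 lam).powerset,
      (μ[(∏ i ∈ S, b i) • (fun ω => ∏ i ∈ S, E.x t i ω) | E.F t]) ω
        = (∏ i ∈ S, b i) * E.p t ω ^ S.card := by
    rw [Filter.eventually_all_finset]
    exact hterm
  filter_upwards [hae] with ω hω
  rw [Finset.sum_apply]
  calc ∑ S ∈ (Finset.Icc 1 lam).powerset,
        (μ[(∏ i ∈ S, b i) • (fun ω => ∏ i ∈ S, E.x t i ω) | E.F t]) ω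
      = ∑ S ∈ (Finset.Icc 1 lam).powerset, (∏ i ∈ S, b i) * E.p t ω ^ S.card :=
        Finset.sum_congr rfl hω
    _ = ∑ S ∈ (Finset.Icc 1 lam).powerset,
          (∏ i ∈ S, (b i * E.p t ω)) * ∏ i ∈ (Finset.Icc 1 lam) \ S, 1 := by
        apply Finset.sum_congr rfl; intro S _
        rw [Finset.prod_const_one, mul_one, Finset.prod_mul_distrib, Finset.prod_const]
    _ = ∏ i ∈ Finset.Icc 1 lam, (b i * E.p t ω + 1) := (Finset.prod_add _ _ _).symm
    _ = ∏ i ∈ Finset.Icc 1 lam, (1 + b i * E.p t ω) := by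
        apply Finset.prod_congr rfl; intros; ring

/-- The key one-step identity for the conditional MGF. -/
lemma condexp_exp_succ (hsum : γ 0 + ∑ i ∈ Finset.Icc 1 lam, γ i = 1) (c : ℝ) (t : ℕ) :
    μ[(fun ω => Real.exp (c * (E.p (t+1) ω - 1/2))) | E.F t] =ᵐ[μ]
      fun ω => Real.exp (c * (E.p t ω - 1/2)) *
        ∏ i ∈ Finset.Icc 1 lam,
          (Real.exp (-(c * γ i * E.p t ω)) * (1 + (Real.exp (c * γ i) - 1) * E.p t ω)) := by
  set b : ℕ → ℝ := fun i => Real.exp (c * γ i) - 1 with hbdef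
  set h : Ω → ℝ := fun ω => Real.exp (c * (γ 0 * E.p t ω - 1/2)) with hhdef
  set G : Ω → ℝ := fun ω => ∏ i ∈ Finset.Icc 1 lam, (1 + b i * E.x t i ω) with hGdef
  have hbinary : ∀ᵐ ω ∂μ, ∀ i ∈ Finset.Icc 1 lam, E.x t i ω = 0 ∨ E.x t i ω = 1 := by
    rw [Filter.eventually_all_finset]; exact fun i hi => E.x_binary t i hi
  have step1 : (fun ω => Real.exp (c * (E.p (t+1) ω - 1/2))) =ᵐ[μ] h * G := by
    filter_upwards [E.update t, hbinary] with ω hu hbin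
    have hexp : Real.exp (c * (E.p (t+1) ω - 1/2))
        = h ω * Real.exp (∑ i ∈ Finset.Icc 1 lam, c * γ i * E.x t i ω) := by
      rw [hu, hhdef, ← Real.exp_add]
      congr 1
      have hswap : ∑ i ∈ Finset.Icc 1 lam, c * γ i * E.x t i ω
          = c * ∑ i ∈ Finset.Icc 1 lam, γ i * E.x t i ω := by
        rw [Finset.mul_sum]; apply Finset.sum_congr rfl; intros; ring
      rw [hswap]; ring
    rw [Pi.mul_apply, hexp, Real.exp_sum]
    congr 1
    apply Finset.prod_congr rfl
    intro i hi
    rcases hbin i hi with h0 | h1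
    · simp [h0]
    · simp [h1, hbdef]
  have hmh : StronglyMeasurable[E.F t] h := by
    apply Measurable.stronglyMeasurable
    exact (Measurable.const_mul ((Measurable.const_mul
      (E.adapted t) (γ 0)).sub measurable_const) c).exp
  have hmG : StronglyMeasurable G := by
    apply Finset.stronglyMeasurable_fun_prod
    intro i hi
    exact stronglyMeasurable_const.add
      (((E.meas_x t i hi).mono (E.F.le _)).const_mul (b i))
  have hGbd : ∀ᵐ ω ∂μ, ‖G ω‖ ≤ ∏ i ∈ Finset.Icc 1 lam, (1 + |b i|) := by
    filter_upwards [hbinary] with ω hbin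
    rw [Real.norm_eq_abs, hGdef, Finset.abs_prod]
    apply Finset.prod_le_prod (fun i _ => abs_nonneg _)
    intro i hi
    rcases hbin i hi with h0 | h1
    · simp [h0]
    · simp only [h1, mul_one]
      exact (abs_add_le _ _).trans (by simp)
  have hintG : Integrable G μ :=
    Integrable.mono' (integrable_const _) hmG.aestronglyMeasurable hGbd
  have hhbd : ∀ᵐ ω ∂μ, ‖h ω‖ ≤ Real.exp (|c| * (|γ 0| + 1)) := by
    filter_upwards [E.p_range t] with ω hp
    rw [Real.norm_eq_abs, hhdef, abs_of_pos (Real.exp_pos _), Real.exp_le_exp]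
    have habs : |γ 0 * E.p t ω - 1/2| ≤ |γ 0| + 1 := by
      have h1 : |γ 0 * E.p t ω| ≤ |γ 0| := by
        rw [abs_mul]
        have h2 : |E.p t ω| ≤ 1 := abs_le.mpr ⟨by linarith [hp.1], hp.2⟩
        nlinarith [abs_nonneg (γ 0)]
      have h3 : |γ 0 * E.p t ω - 1/2| ≤ |γ 0 * E.p t ω| + |(1:ℝ)/2| := by
        rw [sub_eq_add_neg]
        exact (abs_add_le _ _).trans (by rw [abs_neg])
      rw [abs_of_pos (by norm_num : (0:ℝ) < 1/2)] at h3
      linarith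
    calc c * (γ 0 * E.p t ω - 1/2) ≤ |c * (γ 0 * E.p t ω - 1/2)| := le_abs_self _
      _ = |c| * |γ 0 * E.p t ω - 1/2| := abs_mul _ _
      _ ≤ |c| * (|γ 0| + 1) := mul_le_mul_of_nonneg_left habs (abs_nonneg c)
  have hintHG : Integrable (h * G) μ := by
    refine Integrable.mono'
      (integrable_const (Real.exp (|c| * (|γ 0| + 1)) * ∏ i ∈ Finset.Icc 1 lam, (1 + |b i|)))
      (((hmh.mono (E.F.le t)).aestronglyMeasurable).mul hmG.aestronglyMeasurable) ?_
    filter_upwards [hGbd, hhbd] with ω hG hh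
    rw [Pi.mul_apply, norm_mul]
    exact mul_le_mul hh hG (norm_nonneg _) (Real.exp_pos _).le
  have step2 : μ[h * G | E.F t] =ᵐ[μ] h * μ[G | E.F t] :=
    condExp_mul_of_stronglyMeasurable_left hmh hintHG hintG
  have chain : μ[(fun ω => Real.exp (c * (E.p (t+1) ω - 1/2))) | E.F t]
      =ᵐ[μ] fun ω => h ω * ∏ i ∈ Finset.Icc 1 lam, (1 + b i * E.p t ω) :=
    (condExp_congr_ae step1).trans
      (step2.trans (Filter.EventuallyEq.rfl.mul (E.condexp_prod_one_add t b)))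
  filter_upwards [chain] with ω hω
  rw [hω, Finset.prod_mul_distrib]
  have hsum' : ∑ i ∈ Finset.Icc 1 lam, γ i = 1 - γ 0 := by linarith
  have hprodexp : ∏ i ∈ Finset.Icc 1 lam, Real.exp (-(c * γ i * E.p t ω))
      = Real.exp (-(c * E.p t ω * (1 - γ 0))) := by
    rw [← Real.exp_sum]
    congr 1
    have hsc : ∑ i ∈ Finset.Icc 1 lam, c * γ i * E.p t ω
        = c * E.p t ω * ∑ i ∈ Finset.Icc 1 lam, γ i := by
      rw [Finset.mul_sum]; apply Finset.sum_congr rfl; intros; ring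
    rw [Finset.sum_neg_distrib, hsc, hsum']
  rw [hprodexp, hhdef]
  have hkey : Real.exp (c * (E.p t ω - 1/2)) * Real.exp (-(c * E.p t ω * (1 - γ 0)))
      = Real.exp (c * (γ 0 * E.p t ω - 1/2)) := by
    rw [← Real.exp_add]; congr 1; ring
  rw [← mul_assoc, hkey]

/-- The process `exp (c (p t - 1/2))` is a submartingale. -/
lemma submartingale_exp (hsum : γ 0 + ∑ i ∈ Finset.Icc 1 lam, γ i = 1) (c : ℝ) :
    Submartingale (fun t ω => Real.exp (c * (E.p t ω - 1/2))) E.F μ := by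
  have hadp : StronglyAdapted E.F (fun t ω => Real.exp (c * (E.p t ω - 1/2))) := by
    intro t
    apply Measurable.stronglyMeasurable
    exact (Measurable.const_mul ((E.adapted t).sub measurable_const) c).exp
  have hint : ∀ t, Integrable (fun ω => Real.exp (c * (E.p t ω - 1/2))) μ := by
    intro t
    refine Integrable.mono' (integrable_const (Real.exp |c|))
      ((hadp t).mono (E.F.le t)).aestronglyMeasurable ?_
    filter_upwards [E.p_range t] with ω hp
    rw [Real.norm_eq_abs, abs_of_pos (Real.exp_pos _), Real.exp_le_exp]
    calc c * (E.p t ω - 1/2) ≤ |c * (E.p t ω - 1/2)| := le_abs_self _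
      _ = |c| * |E.p t ω - 1/2| := abs_mul _ _
      _ ≤ |c| * 1 := mul_le_mul_of_nonneg_left
          (abs_le.mpr ⟨by linarith [hp.1], by linarith [hp.2]⟩) (abs_nonneg c)
      _ = |c| := mul_one _
  refine submartingale_nat hadp hint (fun t => ?_)
  filter_upwards [E.condexp_exp_succ hsum c t, E.p_range t] with ω hω hp
  rw [hω]
  have hone : (1:ℝ) ≤ ∏ i ∈ Finset.Icc 1 lam,
      (Real.exp (-(c * γ i * E.p t ω)) * (1 + (Real.exp (c * γ i) - 1) * E.p t ω)) := by
    calc (1:ℝ) = ∏ _i ∈ Finset.Icc 1 lam, (1:ℝ) := by simp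
      _ ≤ _ := Finset.prod_le_prod (fun _ _ => zero_le_one)
          (fun i _ => NBaux.one_le_factor hp.1 hp.2)
  nlinarith [Real.exp_pos (c * (E.p t ω - 1/2))]

/-- Growth bound on the expectation of the exponential process. -/
lemma integral_exp_le (hsum : γ 0 + ∑ i ∈ Finset.Icc 1 lam, γ i = 1) (c : ℝ) (t : ℕ) :
    ∫ ω, Real.exp (c * (E.p t ω - 1/2)) ∂μ
      ≤ Real.exp (t * (c ^ 2 * (∑ i ∈ Finset.Icc 1 lam, γ i ^ 2) / 2)) := by
  induction t with
  | zero =>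
    have h0 : ∫ ω, Real.exp (c * (E.p 0 ω - 1/2)) ∂μ = 1 := by
      rw [show (1:ℝ) = ∫ _ : Ω, (1:ℝ) ∂μ by simp]
      apply integral_congr_ae
      filter_upwards [E.p_zero] with ω hω
      rw [hω]; norm_num
    rw [h0]
    simp
  | succ t ih =>
    set s := ∑ i ∈ Finset.Icc 1 lam, γ i ^ 2 with hsdef
    have hintt := (E.submartingale_exp hsum c).integrable t
    have hintt1 := (E.submartingale_exp hsum c).integrable (t+1)
    have h1 : ∫ ω, Real.exp (c * (E.p (t+1) ω - 1/2)) ∂μ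
        = ∫ ω, (μ[(fun ω => Real.exp (c * (E.p (t+1) ω - 1/2))) | E.F t]) ω ∂μ :=
      (integral_condExp (E.F.le t)).symm
    have hae : μ[(fun ω => Real.exp (c * (E.p (t+1) ω - 1/2))) | E.F t]
        ≤ᵐ[μ] fun ω => Real.exp (c ^ 2 * s / 2) * Real.exp (c * (E.p t ω - 1/2)) := by
      filter_upwards [E.condexp_exp_succ hsum c t, E.p_range t] with ω hω hp
      rw [hω]
      have hfac : ∏ i ∈ Finset.Icc 1 lam,
          (Real.exp (-(c * γ i * E.p t ω)) * (1 + (Real.exp (c * γ i) - 1) * E.p t ω))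
            ≤ Real.exp (c ^ 2 * s / 2) := by
        calc ∏ i ∈ Finset.Icc 1 lam,
            (Real.exp (-(c * γ i * E.p t ω)) * (1 + (Real.exp (c * γ i) - 1) * E.p t ω))
            ≤ ∏ i ∈ Finset.Icc 1 lam, Real.exp ((c * γ i) ^ 2 / 2) := by
              apply Finset.prod_le_prod
              · exact fun i _ => le_trans zero_le_one (NBaux.one_le_factor hp.1 hp.2)
              · exact fun i _ => NBaux.factor_le hp.1 hp.2
          _ = Real.exp (∑ i ∈ Finset.Icc 1 lam, (c * γ i) ^ 2 / 2) := (Real.exp_sum _ _).symm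
          _ = Real.exp (c ^ 2 * s / 2) := by
              congr 1
              rw [hsdef, Finset.mul_sum, Finset.sum_div]
              apply Finset.sum_congr rfl; intros; ring
      have he := Real.exp_pos (c * (E.p t ω - 1/2))
      nlinarith
    calc ∫ ω, Real.exp (c * (E.p (t+1) ω - 1/2)) ∂μ
        = ∫ ω, (μ[(fun ω => Real.exp (c * (E.p (t+1) ω - 1/2))) | E.F t]) ω ∂μ := h1
      _ ≤ ∫ ω, Real.exp (c ^ 2 * s / 2) * Real.exp (c * (E.p t ω - 1/2)) ∂μ :=
          integral_mono_ae integrable_condExp (hintt.const_mul _) hae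
      _ = Real.exp (c ^ 2 * s / 2) * ∫ ω, Real.exp (c * (E.p t ω - 1/2)) ∂μ :=
          integral_const_mul _ _
      _ ≤ Real.exp (c ^ 2 * s / 2) * Real.exp (t * (c ^ 2 * s / 2)) :=
          mul_le_mul_of_nonneg_left ih (Real.exp_pos _).le
      _ = Real.exp ((t + 1 : ℕ) * (c ^ 2 * s / 2)) := by
          rw [← Real.exp_add]; congr 1; push_cast; ring

/-- Doob/Chernoff bound for the running maximum. -/
lemma doob_bound (hsum : γ 0 + ∑ i ∈ Finset.Icc 1 lam, γ i = 1) (c : ℝ) (T : ℕ)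
    (r : ℝ) (hr : 0 < r) :
    μ {ω | r ≤ (Finset.range (T+1)).sup' nonempty_range_add_one
        fun k => Real.exp (c * (E.p k ω - 1/2))}
      ≤ ENNReal.ofReal
          (Real.exp (T * (c ^ 2 * (∑ i ∈ Finset.Icc 1 lam, γ i ^ 2) / 2)) / r) := by
  set f : ℕ → Ω → ℝ := fun t ω => Real.exp (c * (E.p t ω - 1/2)) with hfdef
  have hsub : Submartingale f E.F μ := E.submartingale_exp hsum c
  have hnonneg : 0 ≤ f := fun t ω => (Real.exp_pos _).le
  set ε : ℝ≥0 := r.toNNReal with hεdef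
  have hεr : (ε : ℝ) = r := Real.coe_toNNReal r hr.le
  have hmax := maximal_ineq hsub hnonneg (ε := ε) T
  rw [hεr] at hmax
  set S := {ω | r ≤ (Finset.range (T+1)).sup' nonempty_range_add_one fun k => f k ω} with hSdef
  have h2 : ENNReal.ofReal (∫ ω in S, f T ω ∂μ)
      ≤ ENNReal.ofReal (Real.exp (T * (c ^ 2 * (∑ i ∈ Finset.Icc 1 lam, γ i ^ 2) / 2))) := by
    apply ENNReal.ofReal_le_ofReal
    refine le_trans (setIntegral_le_integral (hsub.integrable T) ?_) ?_
    · filter_upwards with ω; exact hnonneg T ω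
    · exact E.integral_exp_le hsum c T
  have h3 : (ε : ℝ≥0∞) * μ S
      ≤ ENNReal.ofReal (Real.exp (T * (c ^ 2 * (∑ i ∈ Finset.Icc 1 lam, γ i ^ 2) / 2))) :=
    le_trans hmax h2
  have hε0 : (ε : ℝ≥0∞) ≠ 0 := by
    simp only [ne_eq, ENNReal.coe_eq_zero, hεdef]
    exact fun h => absurd (Real.toNNReal_eq_zero.mp h) (not_le.mpr hr)
  have hεtop : (ε : ℝ≥0∞) ≠ ⊤ := ENNReal.coe_ne_top
  have h4 : μ S ≤ ENNReal.ofReal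
      (Real.exp (T * (c ^ 2 * (∑ i ∈ Finset.Icc 1 lam, γ i ^ 2) / 2))) / ε := by
    rw [ENNReal.le_div_iff_mul_le (Or.inl hε0) (Or.inl hεtop), mul_comm]
    exact h3
  refine le_trans h4 (le_of_eq ?_)
  rw [ENNReal.ofReal_div_of_pos hr]
  congr 1

end NeutralBitEDA

/-- For every integer `T ≥ 1` and every `δ > 0`, the neutral-bit frequency
process satisfies
`P[∀ t ∈ {0,…,T}, |p t - 1/2| < δ] ≥ 1 - 2 exp(-δ² / (2 T s))`, where
`s = ∑_{i=1}^lam γ i ^ 2`. -/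
theorem neutral_bit_concentration {Ω : Type*} [MeasurableSpace Ω]
    (μ : Measure Ω) [IsProbabilityMeasure μ]
    (lam : ℕ) (hlam : 1 ≤ lam) (γ : ℕ → ℝ)
    (hsum : ∑ i ∈ Finset.range (lam + 1), γ i = 1)
    (hnz : ∃ i ∈ Finset.Icc 1 lam, γ i ≠ 0)
    (E : NeutralBitEDA μ lam γ)
    (T : ℕ) (hT : 1 ≤ T) (δ : ℝ) (hδ : 0 < δ) :
    1 - ENNReal.ofReal
        (2 * Real.exp (-δ ^ 2 /
          (2 * T * ∑ i ∈ Finset.Icc 1 lam, γ i ^ 2)))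
      ≤ μ {ω | ∀ t ≤ T, |E.p t ω - 1 / 2| < δ} := by
  classical
  set s : ℝ := ∑ i ∈ Finset.Icc 1 lam, γ i ^ 2 with hsdef
  have hs0 : 0 < s := by
    obtain ⟨i, hi, hne⟩ := hnz
    exact lt_of_lt_of_le (by positivity)
      (Finset.single_le_sum (fun j _ => sq_nonneg (γ j)) hi)
  have hT0 : (0:ℝ) < T := by exact_mod_cast hT
  have hsum0 : γ 0 + ∑ i ∈ Finset.Icc 1 lam, γ i = 1 := by
    have hins : Finset.range (lam + 1) = insert 0 (Finset.Icc 1 lam) := by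
      ext i
      simp only [Finset.mem_range, Finset.mem_insert, Finset.mem_Icc, Nat.lt_succ_iff]
      omega
    rw [hins, Finset.sum_insert (by simp)] at hsum
    exact hsum
  set c : ℝ := δ / (T * s) with hcdef
  have hc0 : 0 < c := div_pos hδ (by positivity)
  set A := {ω | ∀ t ≤ T, |E.p t ω - 1 / 2| < δ} with hAdef
  have hAm : MeasurableSet A := by
    have hrw : A = ⋂ t, ⋂ (_ : t ≤ T), {ω | |E.p t ω - 1/2| < δ} := by
      ext ω; simp [hAdef]
    rw [hrw]
    refine MeasurableSet.iInter fun t => MeasurableSet.iInter fun _ => ?_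
    have hm : Measurable fun ω => |E.p t ω - 1/2| :=
      (((E.adapted t).mono (E.F.le t) le_rfl).sub measurable_const).abs
    exact measurableSet_lt hm measurable_const
  have hval : Real.exp ((T:ℝ) * (c ^ 2 * s / 2)) / Real.exp (c * δ)
      = Real.exp (-δ ^ 2 / (2 * T * s)) := by
    rw [← Real.exp_sub]
    congr 1
    rw [hcdef]
    field_simp
    ring
  have hbp := E.doob_bound hsum0 c T (Real.exp (c * δ)) (Real.exp_pos _)
  have hbm := E.doob_bound hsum0 (-c) T (Real.exp (c * δ)) (Real.exp_pos _)
  rw [neg_pow, ← hsdef] at hbm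
  rw [← hsdef] at hbp
  rw [show ((-1:ℝ)) ^ 2 * c ^ 2 = c ^ 2 by ring] at hbm
  rw [hval] at hbp hbm
  have hsubset : Aᶜ ⊆
      {ω | Real.exp (c * δ) ≤ (Finset.range (T+1)).sup' nonempty_range_add_one
          fun k => Real.exp (c * (E.p k ω - 1/2))} ∪
      {ω | Real.exp (c * δ) ≤ (Finset.range (T+1)).sup' nonempty_range_add_one
          fun k => Real.exp ((-c) * (E.p k ω - 1/2))} := by
    intro ω hω
    simp only [hAdef, Set.mem_compl_iff, Set.mem_setOf_eq, not_forall, not_lt] at hω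
    obtain ⟨t, ht, hts⟩ := hω
    have htm : t ∈ Finset.range (T + 1) := Finset.mem_range.mpr (Nat.lt_succ_of_le ht)
    rcases le_abs.mp hts with hcase | hcase
    · left
      refine Set.mem_setOf_eq ▸ le_trans ?_ (Finset.le_sup' _ htm)
      exact Real.exp_le_exp.mpr (mul_le_mul_of_nonneg_left hcase hc0.le)
    · right
      refine Set.mem_setOf_eq ▸ le_trans ?_ (Finset.le_sup' _ htm)
      apply Real.exp_le_exp.mpr
      nlinarith [mul_le_mul_of_nonneg_left hcase hc0.le]
  have hcompl : μ Aᶜ ≤ ENNReal.ofReal (2 * Real.exp (-δ ^ 2 / (2 * T * s))) := by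
    calc μ Aᶜ ≤ μ (_ ∪ _) := measure_mono hsubset
      _ ≤ _ + _ := measure_union_le _ _
      _ ≤ ENNReal.ofReal (Real.exp (-δ ^ 2 / (2 * T * s)))
            + ENNReal.ofReal (Real.exp (-δ ^ 2 / (2 * T * s))) := add_le_add hbp hbm
      _ = ENNReal.ofReal (2 * Real.exp (-δ ^ 2 / (2 * T * s))) := by
          rw [← ENNReal.ofReal_add (Real.exp_pos _).le (Real.exp_pos _).le]
          congr 1
          ring
  rw [tsub_le_iff_right]
  calc (1:ℝ≥0∞) = μ A + μ Aᶜ := (prob_add_prob_compl hAm).symm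
    _ ≤ μ A + ENNReal.ofReal (2 * Real.exp (-δ ^ 2 / (2 * T * s))) :=
        add_le_add_right hcompl _
end

section
/- Let n ≥ 2 be an integer and let (p_1(t))_{t≥0}, …, (p_n(t))_{t≥0} be n mutually independent copies of the neutral-bit frequency process. Set T_0 := 1 / (144 · s · ln n). Then P[ for every i ∈ {1,…,n} and every integer t with 0 ≤ t ≤ T_0, p_i(t) ∈ [1/3, 2/3] ] ≥ 1 − 2/n. -/
open MeasureTheory ProbabilityTheory Finset
open scoped ENNReal NNReal

section PointwiseLemmas

lemma exp_convex_comb {q a b : ℝ} (h0 : 0 ≤ q) (h1 : q ≤ 1) :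
    Real.exp ((1 - q) * a + q * b) ≤ (1 - q) * Real.exp a + q * Real.exp b := by
  have := convexOn_exp.2 (Set.mem_univ a) (Set.mem_univ b)
    (sub_nonneg.2 h1) h0 (by ring : (1 - q) + q = 1)
  simpa [smul_eq_mul] using this

lemma bern_mgf_le {q u : ℝ} (h0 : 0 ≤ q) (h1 : q ≤ 1) :
    1 + (Real.exp u - 1) * q ≤ Real.exp (q * u + u ^ 2 / 2) := by
  have h1' : Real.exp (-(q * u)) ≤ (1 - q) + q * Real.exp (-u) := by
    have := exp_convex_comb (a := 0) (b := -u) h0 h1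
    simpa [mul_comm] using this
  have h2' : Real.exp (u - q * u) ≤ (1 - q) * Real.exp u + q := by
    have := exp_convex_comb (a := u) (b := 0) h0 h1
    have e : (1 - q) * u + q * 0 = u - q * u := by ring
    rw [e] at this; simpa using this
  have hc : Real.cosh u ≤ Real.exp (u ^ 2 / 2) := Real.cosh_le_exp_half_sq u
  have hc1 : 1 ≤ Real.cosh u := Real.one_le_cosh u
  have hcosh : Real.cosh u = (Real.exp u + Real.exp (-u)) / 2 := Real.cosh_eq u
  set E := Real.exp (q * u) with hE_def
  have hE : 0 < E := Real.exp_pos _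
  have hm : E * Real.exp (-(q * u)) = 1 := by rw [← Real.exp_add]; simp
  have hm2 : E * Real.exp (u - q * u) = Real.exp u := by rw [← Real.exp_add]; ring_nf
  have t1 : 1 - q ≤ E * ((1 - q) * (1 - q) + q * (1 - q) * Real.exp (-u)) := by
    have h := mul_le_mul_of_nonneg_left h1' (mul_nonneg hE.le (sub_nonneg.2 h1))
    calc 1 - q = E * (1 - q) * Real.exp (-(q * u)) := by linear_combination (q - 1) * hm
      _ ≤ E * (1 - q) * ((1 - q) + q * Real.exp (-u)) := h
      _ = E * ((1 - q) * (1 - q) + q * (1 - q) * Real.exp (-u)) := by ring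
  have t2 : q * Real.exp u ≤ E * (q * (1 - q) * Real.exp u + q * q) := by
    have h := mul_le_mul_of_nonneg_left h2' (mul_nonneg hE.le h0)
    calc q * Real.exp u = E * q * Real.exp (u - q * u) := by linear_combination (-q) * hm2
      _ ≤ E * q * ((1 - q) * Real.exp u + q) := h
      _ = E * (q * (1 - q) * Real.exp u + q * q) := by ring
  have hcoef : (0:ℝ) ≤ 1 - 2 * q * (1 - q) := by nlinarith
  have t3 : E * (1 - 2 * q * (1 - q)) * 1 ≤ E * (1 - 2 * q * (1 - q)) * Real.cosh u :=
    mul_le_mul_of_nonneg_left hc1 (mul_nonneg hE.le hcoef)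
  have t4 : E * (2 * q * (1 - q)) * Real.cosh u
      = q * (1 - q) * (E * Real.exp u) + q * (1 - q) * (E * Real.exp (-u)) := by
    rw [hcosh]; ring
  have key : 1 + (Real.exp u - 1) * q ≤ E * Real.cosh u := by linarith
  calc 1 + (Real.exp u - 1) * q ≤ E * Real.cosh u := key
    _ ≤ E * Real.exp (u ^ 2 / 2) := mul_le_mul_of_nonneg_left hc hE.le
    _ = Real.exp (q * u + u ^ 2 / 2) := (Real.exp_add _ _).symm

lemma bern_mgf_ge {q u : ℝ} (h0 : 0 ≤ q) (h1 : q ≤ 1) :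
    Real.exp (q * u) ≤ 1 + (Real.exp u - 1) * q := by
  have := exp_convex_comb (a := 0) (b := u) h0 h1
  have e : (1 - q) * 0 + q * u = q * u := by ring
  rw [e] at this
  calc Real.exp (q * u) ≤ (1 - q) * Real.exp 0 + q * Real.exp u := this
    _ = 1 + (Real.exp u - 1) * q := by rw [Real.exp_zero]; ring

lemma prod_one_add_expand (a v : ℕ → ℝ) (s : Finset ℕ) :
    ∏ i ∈ s, (1 + a i * v i) = ∑ S ∈ s.powerset, (∏ i ∈ S, a i) * ∏ i ∈ S, v i := by
  have h := Finset.prod_add (fun i => a i * v i) (fun _ => (1:ℝ)) s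
  simp only [Finset.prod_const_one, mul_one] at h
  calc ∏ i ∈ s, (1 + a i * v i) = ∏ i ∈ s, (a i * v i + 1) :=
        Finset.prod_congr rfl fun i _ => add_comm _ _
    _ = ∑ S ∈ s.powerset, ∏ i ∈ S, (a i * v i) := h
    _ = ∑ S ∈ s.powerset, (∏ i ∈ S, a i) * ∏ i ∈ S, v i :=
        Finset.sum_congr rfl fun S _ => Finset.prod_mul_distrib

end PointwiseLemmas

namespace NeutralBitEDA

variable {Ω : Type*} [MeasurableSpace Ω] {μ : Measure Ω} [IsProbabilityMeasure μ]
  {lam : ℕ} {γ : ℕ → ℝ}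

set_option linter.unusedSectionVars false

/-- The exponential moment process. -/
noncomputable def M (E : NeutralBitEDA μ lam γ) (c : ℝ) (t : ℕ) : Ω → ℝ :=
  fun ω => Real.exp (c * (E.p t ω - 1/2))

lemma M_meas (E : NeutralBitEDA μ lam γ) (c : ℝ) (t : ℕ) :
    StronglyMeasurable[E.F t] (E.M c t) :=
  Real.continuous_exp.comp_stronglyMeasurable
    (((E.adapted t).stronglyMeasurable.sub stronglyMeasurable_const).const_mul c)

lemma M_pos (E : NeutralBitEDA μ lam γ) (c : ℝ) (t : ℕ) (ω : Ω) : 0 < E.M c t ω :=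
  Real.exp_pos _

lemma M_bdd (E : NeutralBitEDA μ lam γ) (c : ℝ) (t : ℕ) :
    ∀ᵐ ω ∂μ, |E.M c t ω| ≤ Real.exp |c| := by
  filter_upwards [E.p_range t] with ω hq
  simp only [M, Real.abs_exp]
  apply Real.exp_le_exp.2
  calc c * (E.p t ω - 1/2) ≤ |c * (E.p t ω - 1/2)| := le_abs_self _
    _ = |c| * |E.p t ω - 1/2| := abs_mul _ _
    _ ≤ |c| * 1 := mul_le_mul_of_nonneg_left
        (abs_le.2 ⟨by linarith [hq.1], by linarith [hq.2]⟩) (abs_nonneg c)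
    _ = |c| := mul_one _

lemma M_integrable (E : NeutralBitEDA μ lam γ) (c : ℝ) (t : ℕ) :
    Integrable (E.M c t) μ :=
  (integrable_const (Real.exp |c|)).mono'
    ((E.M_meas c t).mono (E.F.le t)).aestronglyMeasurable
    (by simpa [Real.norm_eq_abs] using E.M_bdd c t)

/-- The exact formula for the conditional expectation of the exponential moment. -/
theorem condexp_M (E : NeutralBitEDA μ lam γ) (c : ℝ) (t : ℕ) :
    μ[E.M c (t+1) | E.F t] =ᵐ[μ]
      fun ω => Real.exp (c * (γ 0 * E.p t ω - 1/2)) *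
        ∏ i ∈ Finset.Icc 1 lam, (1 + (Real.exp (c * γ i) - 1) * E.p t ω) := by
  classical
  set a : ℕ → ℝ := fun i => Real.exp (c * γ i) - 1 with ha
  set h : Ω → ℝ := fun ω => Real.exp (c * (γ 0 * E.p t ω - 1/2)) with hh
  have hhmeas : StronglyMeasurable[E.F t] h :=
    Real.continuous_exp.comp_stronglyMeasurable
      ((((E.adapted t).stronglyMeasurable.const_mul (γ 0)).sub stronglyMeasurable_const).const_mul c)
  have hhb : ∀ᵐ ω ∂μ, |h ω| ≤ Real.exp (|c| * (|γ 0| + 1)) := by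
    filter_upwards [E.p_range t] with ω hq
    simp only [hh, Real.abs_exp]
    apply Real.exp_le_exp.2
    have habs : |γ 0 * E.p t ω - 1/2| ≤ |γ 0| + 1 := by
      have h1 : |γ 0 * E.p t ω - 1/2| ≤ |γ 0 * E.p t ω| + |(1:ℝ)/2| := abs_sub _ _
      have h2 : |γ 0 * E.p t ω| = |γ 0| * |E.p t ω| := abs_mul _ _
      have h3 : |E.p t ω| ≤ 1 := abs_le.2 ⟨by linarith [hq.1], hq.2⟩
      have h4 : |γ 0| * |E.p t ω| ≤ |γ 0| * 1 :=
        mul_le_mul_of_nonneg_left h3 (abs_nonneg _)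
      rw [h2] at h1
      have : |(1:ℝ)/2| = 1/2 := by norm_num
      rw [this] at h1; linarith
    calc c * (γ 0 * E.p t ω - 1/2) ≤ |c * (γ 0 * E.p t ω - 1/2)| := le_abs_self _
      _ = |c| * |γ 0 * E.p t ω - 1/2| := abs_mul _ _
      _ ≤ |c| * (|γ 0| + 1) := mul_le_mul_of_nonneg_left habs (abs_nonneg c)
  have hbin : ∀ᵐ ω ∂μ, ∀ i, i ∈ Finset.Icc 1 lam →
      (E.x t i ω = 0 ∨ E.x t i ω = 1) := by
    rw [ae_all_iff]
    intro i
    by_cases hi : i ∈ Finset.Icc 1 lam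
    · filter_upwards [E.x_binary t i hi] with ω hω _; exact hω
    · filter_upwards with ω hω; exact absurd hω hi
  have hXmeas : ∀ S : Finset ℕ, S ⊆ Finset.Icc 1 lam →
      AEStronglyMeasurable (fun ω => ∏ i ∈ S, E.x t i ω) μ := fun S hS =>
    ((Finset.stronglyMeasurable_fun_prod S fun i hi => E.meas_x t i (hS hi)).mono
      (E.F.le (t+1))).aestronglyMeasurable
  have hXbd : ∀ S : Finset ℕ, S ⊆ Finset.Icc 1 lam →
      ∀ᵐ ω ∂μ, |∏ i ∈ S, E.x t i ω| ≤ 1 := by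
    intro S hS
    filter_upwards [hbin] with ω hb
    have h0 : ∀ i ∈ S, (0:ℝ) ≤ E.x t i ω := by
      intro i hi; rcases hb i (hS hi) with h | h <;> rw [h] <;> norm_num
    have h1 : ∀ i ∈ S, E.x t i ω ≤ 1 := by
      intro i hi; rcases hb i (hS hi) with h | h <;> rw [h] <;> norm_num
    rw [abs_of_nonneg (Finset.prod_nonneg h0)]
    exact Finset.prod_le_one h0 h1
  have hintX : ∀ S : Finset ℕ, S ⊆ Finset.Icc 1 lam →
      Integrable (fun ω => ∏ i ∈ S, E.x t i ω) μ := fun S hS =>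
    (integrable_const (1:ℝ)).mono' (hXmeas S hS)
      ((hXbd S hS).mono fun ω hω => by rwa [Real.norm_eq_abs])
  have hint : ∀ S ∈ (Finset.Icc 1 lam).powerset,
      Integrable (fun ω => (∏ i ∈ S, a i) * (h ω * ∏ i ∈ S, E.x t i ω)) μ := by
    intro S hS
    rw [Finset.mem_powerset] at hS
    have hmul : Integrable (fun ω => h ω * ∏ i ∈ S, E.x t i ω) μ := by
      refine (integrable_const (Real.exp (|c| * (|γ 0| + 1)) * 1)).mono'
        ((hhmeas.mono (E.F.le t)).aestronglyMeasurable.mul (hXmeas S hS)) ?_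
      filter_upwards [hhb, hXbd S hS] with ω h1 h2
      rw [Real.norm_eq_abs, abs_mul]
      exact mul_le_mul h1 h2 (abs_nonneg _) (Real.exp_pos _).le
    exact hmul.const_mul _
  -- Step A: expand the exponential as a polynomial in the samples
  have hA : E.M c (t+1) =ᵐ[μ] fun ω => ∑ S ∈ (Finset.Icc 1 lam).powerset,
      (∏ i ∈ S, a i) * (h ω * ∏ i ∈ S, E.x t i ω) := by
    filter_upwards [E.update t, hbin] with ω hup hb
    have e0 : (∑ i ∈ Finset.Icc 1 lam, c * γ i * E.x t i ω)
        = c * ∑ i ∈ Finset.Icc 1 lam, γ i * E.x t i ω := by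
      rw [Finset.mul_sum]; exact Finset.sum_congr rfl fun i _ => by ring
    have e1 : c * (E.p (t+1) ω - 1/2)
        = c * (γ 0 * E.p t ω - 1/2) + ∑ i ∈ Finset.Icc 1 lam, c * γ i * E.x t i ω := by
      rw [e0, hup]; ring
    calc E.M c (t+1) ω = Real.exp (c * (E.p (t+1) ω - 1/2)) := rfl
      _ = h ω * ∏ i ∈ Finset.Icc 1 lam, Real.exp (c * γ i * E.x t i ω) := by
          rw [e1, Real.exp_add, Real.exp_sum]
      _ = h ω * ∏ i ∈ Finset.Icc 1 lam, (1 + a i * E.x t i ω) := by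
          congr 1
          refine Finset.prod_congr rfl fun i hi => ?_
          rcases hb i hi with h0 | h1
          · simp [h0]
          · simp only [h1, mul_one, ha]; ring
      _ = ∑ S ∈ (Finset.Icc 1 lam).powerset,
            (∏ i ∈ S, a i) * (h ω * ∏ i ∈ S, E.x t i ω) := by
          rw [prod_one_add_expand a (fun i => E.x t i ω) _, Finset.mul_sum]
          exact Finset.sum_congr rfl fun S _ => by ring
  -- Step B: compute the conditional expectation of each term
  have hB : ∀ S ∈ (Finset.Icc 1 lam).powerset,
      μ[(fun ω => (∏ i ∈ S, a i) * (h ω * ∏ i ∈ S, E.x t i ω)) | E.F t]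
        =ᵐ[μ] fun ω => (∏ i ∈ S, a i) * (h ω * E.p t ω ^ S.card) := by
    intro S hS
    rw [Finset.mem_powerset] at hS
    have h1 : (fun ω => (∏ i ∈ S, a i) * (h ω * ∏ i ∈ S, E.x t i ω))
        = (fun ω => (∏ i ∈ S, a i) * h ω) * (fun ω => ∏ i ∈ S, E.x t i ω) := by
      ext ω; simp [mul_assoc]
    rw [h1]
    refine (condExp_mul_of_stronglyMeasurable_left (hhmeas.const_mul _) ?_ (hintX S hS)).trans ?_
    · rw [← h1]; exact hint S (Finset.mem_powerset.2 hS)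
    · filter_upwards [E.cond_iid t S hS] with ω hω
      simp only [Pi.mul_apply]
      rw [hω]; ring
  -- Combine
  have hfun : (fun ω => ∑ S ∈ (Finset.Icc 1 lam).powerset,
      (∏ i ∈ S, a i) * (h ω * ∏ i ∈ S, E.x t i ω))
      = ∑ S ∈ (Finset.Icc 1 lam).powerset,
        (fun ω => (∏ i ∈ S, a i) * (h ω * ∏ i ∈ S, E.x t i ω)) := by
    ext ω; rw [Finset.sum_apply]
  have step1b : μ[(fun ω => ∑ S ∈ (Finset.Icc 1 lam).powerset,
      (∏ i ∈ S, a i) * (h ω * ∏ i ∈ S, E.x t i ω)) | E.F t] =ᵐ[μ]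
      ∑ S ∈ (Finset.Icc 1 lam).powerset,
        μ[(fun ω => (∏ i ∈ S, a i) * (h ω * ∏ i ∈ S, E.x t i ω)) | E.F t] := by
    rw [hfun]; exact condExp_finset_sum hint (E.F t)
  have step1 := (condExp_congr_ae (m := E.F t) hA).trans step1b
  have hBall : ∀ᵐ ω ∂μ, ∀ S, S ∈ (Finset.Icc 1 lam).powerset →
      (μ[(fun ω => (∏ i ∈ S, a i) * (h ω * ∏ i ∈ S, E.x t i ω)) | E.F t]) ω
        = (∏ i ∈ S, a i) * (h ω * E.p t ω ^ S.card) := by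
    rw [ae_all_iff]
    intro S
    by_cases hS : S ∈ (Finset.Icc 1 lam).powerset
    · filter_upwards [hB S hS] with ω hω _; exact hω
    · filter_upwards with ω hω; exact absurd hω hS
  refine step1.trans ?_
  filter_upwards [hBall] with ω hω
  rw [Finset.sum_apply]
  have : ∑ S ∈ (Finset.Icc 1 lam).powerset,
      (μ[(fun ω => (∏ i ∈ S, a i) * (h ω * ∏ i ∈ S, E.x t i ω)) | E.F t]) ω
      = ∑ S ∈ (Finset.Icc 1 lam).powerset,
        (∏ i ∈ S, a i) * (h ω * E.p t ω ^ S.card) :=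
    Finset.sum_congr rfl fun S hS => hω S hS
  rw [this, prod_one_add_expand a (fun _ => E.p t ω) _, Finset.mul_sum]
  exact Finset.sum_congr rfl fun S _ => by rw [Finset.prod_const]; ring

end NeutralBitEDA
namespace NeutralBitEDA

variable {Ω : Type*} [MeasurableSpace Ω] {μ : Measure Ω} [IsProbabilityMeasure μ]
  {lam : ℕ} {γ : ℕ → ℝ}

lemma sum_Icc_gamma (hsum : ∑ i ∈ Finset.range (lam + 1), γ i = 1) :
    ∑ i ∈ Finset.Icc 1 lam, γ i = 1 - γ 0 := by
  have h1 : ∑ i ∈ Finset.Icc 1 lam, γ i = ∑ i ∈ Finset.range lam, γ (1 + i) := by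
    rw [← Finset.Ico_add_one_right_eq_Icc, Finset.sum_Ico_eq_sum_range]; simp
  have h2 := Finset.sum_range_succ' γ lam
  rw [hsum] at h2
  have h3 : ∑ i ∈ Finset.range lam, γ (1 + i) = ∑ i ∈ Finset.range lam, γ (i + 1) :=
    Finset.sum_congr rfl fun i _ => by rw [add_comm]
  rw [h1, h3]; linarith

lemma condexp_M_le (E : NeutralBitEDA μ lam γ)
    (hsum : ∑ i ∈ Finset.range (lam + 1), γ i = 1) (c : ℝ) (t : ℕ) :
    μ[E.M c (t+1) | E.F t] ≤ᵐ[μ]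
      fun ω => Real.exp (c^2 * (∑ i ∈ Finset.Icc 1 lam, γ i ^ 2) / 2) * E.M c t ω := by
  have hγ := sum_Icc_gamma hsum
  filter_upwards [E.condexp_M c t, E.p_range t] with ω heq hq
  rw [heq]
  have hprod : ∏ i ∈ Finset.Icc 1 lam, (1 + (Real.exp (c * γ i) - 1) * E.p t ω)
      ≤ Real.exp (E.p t ω * (c * (1 - γ 0))
          + c^2 * (∑ i ∈ Finset.Icc 1 lam, γ i ^ 2) / 2) := by
    calc ∏ i ∈ Finset.Icc 1 lam, (1 + (Real.exp (c * γ i) - 1) * E.p t ω)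
        ≤ ∏ i ∈ Finset.Icc 1 lam, Real.exp (E.p t ω * (c * γ i) + (c * γ i)^2 / 2) :=
          Finset.prod_le_prod
            (fun i _ => (Real.exp_pos _).le.trans (bern_mgf_ge hq.1 hq.2))
            (fun i _ => bern_mgf_le hq.1 hq.2)
      _ = Real.exp (∑ i ∈ Finset.Icc 1 lam, (E.p t ω * (c * γ i) + (c * γ i)^2 / 2)) :=
          (Real.exp_sum _ _).symm
      _ = Real.exp (E.p t ω * (c * (1 - γ 0))
            + c^2 * (∑ i ∈ Finset.Icc 1 lam, γ i ^ 2) / 2) := by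
          congr 1
          rw [Finset.sum_add_distrib]
          have e1 : ∑ i ∈ Finset.Icc 1 lam, E.p t ω * (c * γ i)
              = (E.p t ω * c) * ∑ i ∈ Finset.Icc 1 lam, γ i := by
            rw [Finset.mul_sum]; exact Finset.sum_congr rfl fun i _ => by ring
          have e2 : ∑ i ∈ Finset.Icc 1 lam, (c * γ i)^2 / 2
              = (c^2 / 2) * ∑ i ∈ Finset.Icc 1 lam, γ i ^ 2 := by
            rw [Finset.mul_sum]; exact Finset.sum_congr rfl fun i _ => by ring
          rw [e1, e2, hγ]; ring
  calc Real.exp (c * (γ 0 * E.p t ω - 1/2))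
        * ∏ i ∈ Finset.Icc 1 lam, (1 + (Real.exp (c * γ i) - 1) * E.p t ω)
      ≤ Real.exp (c * (γ 0 * E.p t ω - 1/2))
        * Real.exp (E.p t ω * (c * (1 - γ 0))
            + c^2 * (∑ i ∈ Finset.Icc 1 lam, γ i ^ 2) / 2) :=
        mul_le_mul_of_nonneg_left hprod (Real.exp_pos _).le
    _ = Real.exp (c^2 * (∑ i ∈ Finset.Icc 1 lam, γ i ^ 2) / 2) * E.M c t ω := by
        simp only [M]
        rw [← Real.exp_add, ← Real.exp_add]
        congr 1; ring

lemma condexp_M_ge (E : NeutralBitEDA μ lam γ)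
    (hsum : ∑ i ∈ Finset.range (lam + 1), γ i = 1) (c : ℝ) (t : ℕ) :
    E.M c t ≤ᵐ[μ] μ[E.M c (t+1) | E.F t] := by
  have hγ := sum_Icc_gamma hsum
  filter_upwards [E.condexp_M c t, E.p_range t] with ω heq hq
  rw [heq]
  have e1 : ∑ i ∈ Finset.Icc 1 lam, E.p t ω * (c * γ i)
      = E.p t ω * (c * (1 - γ 0)) := by
    have e0 : ∑ i ∈ Finset.Icc 1 lam, E.p t ω * (c * γ i)
        = (E.p t ω * c) * ∑ i ∈ Finset.Icc 1 lam, γ i := by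
      rw [Finset.mul_sum]; exact Finset.sum_congr rfl fun i _ => by ring
    rw [e0, hγ]; ring
  have hprod : Real.exp (E.p t ω * (c * (1 - γ 0)))
      ≤ ∏ i ∈ Finset.Icc 1 lam, (1 + (Real.exp (c * γ i) - 1) * E.p t ω) := by
    calc Real.exp (E.p t ω * (c * (1 - γ 0)))
        = ∏ i ∈ Finset.Icc 1 lam, Real.exp (E.p t ω * (c * γ i)) := by
          rw [← Real.exp_sum, e1]
      _ ≤ ∏ i ∈ Finset.Icc 1 lam, (1 + (Real.exp (c * γ i) - 1) * E.p t ω) :=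
          Finset.prod_le_prod (fun i _ => (Real.exp_pos _).le)
            (fun i _ => bern_mgf_ge hq.1 hq.2)
  calc E.M c t ω
      = Real.exp (c * (γ 0 * E.p t ω - 1/2)) * Real.exp (E.p t ω * (c * (1 - γ 0))) := by
        simp only [M]; rw [← Real.exp_add]; congr 1; ring
    _ ≤ Real.exp (c * (γ 0 * E.p t ω - 1/2))
        * ∏ i ∈ Finset.Icc 1 lam, (1 + (Real.exp (c * γ i) - 1) * E.p t ω) :=
        mul_le_mul_of_nonneg_left hprod (Real.exp_pos _).le

end NeutralBitEDA
namespace NeutralBitEDA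

variable {Ω : Type*} [MeasurableSpace Ω] {μ : Measure Ω} [IsProbabilityMeasure μ]
  {lam : ℕ} {γ : ℕ → ℝ}

lemma M_submartingale (E : NeutralBitEDA μ lam γ)
    (hsum : ∑ i ∈ Finset.range (lam + 1), γ i = 1) (c : ℝ) :
    Submartingale (E.M c) E.F μ :=
  submartingale_nat (fun t => E.M_meas c t) (fun t => E.M_integrable c t)
    (fun t => E.condexp_M_ge hsum c t)

lemma integral_M_le (E : NeutralBitEDA μ lam γ)
    (hsum : ∑ i ∈ Finset.range (lam + 1), γ i = 1) (c : ℝ) :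
    ∀ t : ℕ, ∫ ω, E.M c t ω ∂μ
      ≤ Real.exp (c^2 * (∑ i ∈ Finset.Icc 1 lam, γ i ^ 2) / 2) ^ t := by
  intro t
  induction t with
  | zero =>
    have h0 : E.M c 0 =ᵐ[μ] fun _ => (1:ℝ) := by
      filter_upwards [E.p_zero] with ω h
      simp [M, h]
    rw [integral_congr_ae h0]
    simp
  | succ t ih =>
    have hle := E.condexp_M_le hsum c t
    have hexp := Real.exp_pos (c^2 * (∑ i ∈ Finset.Icc 1 lam, γ i ^ 2) / 2)
    calc ∫ ω, E.M c (t+1) ω ∂μ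
        = ∫ ω, (μ[E.M c (t+1) | E.F t]) ω ∂μ := (integral_condExp (E.F.le t)).symm
      _ ≤ ∫ ω, Real.exp (c^2 * (∑ i ∈ Finset.Icc 1 lam, γ i ^ 2) / 2) * E.M c t ω ∂μ :=
          integral_mono_ae integrable_condExp ((E.M_integrable c t).const_mul _) hle
      _ = Real.exp (c^2 * (∑ i ∈ Finset.Icc 1 lam, γ i ^ 2) / 2) * ∫ ω, E.M c t ω ∂μ :=
          integral_const_mul _ _
      _ ≤ Real.exp (c^2 * (∑ i ∈ Finset.Icc 1 lam, γ i ^ 2) / 2)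
          * Real.exp (c^2 * (∑ i ∈ Finset.Icc 1 lam, γ i ^ 2) / 2) ^ t :=
          mul_le_mul_of_nonneg_left ih hexp.le
      _ = Real.exp (c^2 * (∑ i ∈ Finset.Icc 1 lam, γ i ^ 2) / 2) ^ (t+1) := by
          rw [pow_succ]; ring

lemma M_tail (E : NeutralBitEDA μ lam γ)
    (hsum : ∑ i ∈ Finset.range (lam + 1), γ i = 1) (c : ℝ) (T : ℕ)
    {ε : ℝ} (hε : 0 < ε) :
    μ {ω | ε ≤ (Finset.range (T+1)).sup' Finset.nonempty_range_add_one fun k => E.M c k ω}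
      ≤ ENNReal.ofReal
          (Real.exp (c^2 * (∑ i ∈ Finset.Icc 1 lam, γ i ^ 2) / 2) ^ T / ε) := by
  have hsub := E.M_submartingale hsum c
  have hnn : 0 ≤ E.M c := fun t ω => (E.M_pos c t ω).le
  have hmax := maximal_ineq hsub hnn (ε := ε.toNNReal) T
  have hcoe : ((ε.toNNReal : ℝ≥0) : ℝ) = ε := Real.coe_toNNReal _ hε.le
  rw [hcoe] at hmax
  have hsetint : ∫ ω in {ω | ε ≤ (Finset.range (T+1)).sup' Finset.nonempty_range_add_one
        fun k => E.M c k ω}, E.M c T ω ∂μ ≤ ∫ ω, E.M c T ω ∂μ :=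
    setIntegral_le_integral (E.M_integrable c T)
      (Filter.Eventually.of_forall fun ω => (E.M_pos c T ω).le)
  have h1 : ENNReal.ofReal ε
      * μ {ω | ε ≤ (Finset.range (T+1)).sup' Finset.nonempty_range_add_one
          fun k => E.M c k ω}
      ≤ ENNReal.ofReal
          (Real.exp (c^2 * (∑ i ∈ Finset.Icc 1 lam, γ i ^ 2) / 2) ^ T) := by
    calc ENNReal.ofReal ε * μ _ = ε.toNNReal • μ _ := by
          rw [ENNReal.smul_def]; rfl
      _ ≤ ENNReal.ofReal (∫ ω in {ω | ε ≤ (Finset.range (T+1)).sup'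
            Finset.nonempty_range_add_one fun k => E.M c k ω}, E.M c T ω ∂μ) := hmax
      _ ≤ ENNReal.ofReal (∫ ω, E.M c T ω ∂μ) := ENNReal.ofReal_le_ofReal hsetint
      _ ≤ _ := ENNReal.ofReal_le_ofReal (E.integral_M_le hsum c T)
  rw [ENNReal.ofReal_div_of_pos hε]
  refine (ENNReal.le_div_iff_mul_le (Or.inl ?_) (Or.inl ENNReal.ofReal_ne_top)).2 ?_
  · exact (ENNReal.ofReal_pos.2 hε).ne'
  · rwa [mul_comm]

lemma process_bad (E : NeutralBitEDA μ lam γ)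
    (hsum : ∑ i ∈ Finset.range (lam + 1), γ i = 1) {L : ℝ} (hL : 0 < L)
    (hs : 0 < ∑ i ∈ Finset.Icc 1 lam, γ i ^ 2) {T : ℕ} (hT : 1 ≤ T)
    (hsT : (∑ i ∈ Finset.Icc 1 lam, γ i ^ 2) * T ≤ 1 / (144 * L)) :
    μ {ω | ∃ k ≤ T, E.p k ω ∉ Set.Icc (1/3:ℝ) (2/3)}
      ≤ ENNReal.ofReal (2 * Real.exp (-(2*L))) := by
  set S := ∑ i ∈ Finset.Icc 1 lam, γ i ^ 2 with hSdef
  have hTpos : (0:ℝ) < T := by exact_mod_cast hT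
  have h6 : (0:ℝ) < 6 * S * T := mul_pos (mul_pos (by norm_num) hs) hTpos
  set c : ℝ := 1 / (6 * S * T) with hcdef
  have hcpos : 0 < c := div_pos one_pos h6
  have hε : (0:ℝ) < Real.exp (c/6) := Real.exp_pos _
  have hincl : {ω | ∃ k ≤ T, E.p k ω ∉ Set.Icc (1/3:ℝ) (2/3)} ⊆
      {ω | Real.exp (c/6) ≤ (Finset.range (T+1)).sup' Finset.nonempty_range_add_one
          fun k => E.M c k ω} ∪
      {ω | Real.exp (c/6) ≤ (Finset.range (T+1)).sup' Finset.nonempty_range_add_one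
          fun k => E.M (-c) k ω} := by
    rintro ω ⟨k, hk, hnot⟩
    rw [Set.mem_Icc, not_and_or, not_le, not_le] at hnot
    have hmem : k ∈ Finset.range (T+1) := Finset.mem_range.2 (Nat.lt_succ_of_le hk)
    rcases hnot with hlt | hgt
    · right
      refine Set.mem_setOf.2 (le_trans ?_ (Finset.le_sup' _ hmem))
      show Real.exp (c/6) ≤ Real.exp (-c * (E.p k ω - 1/2))
      apply Real.exp_le_exp.2
      nlinarith
    · left
      refine Set.mem_setOf.2 (le_trans ?_ (Finset.le_sup' _ hmem))
      show Real.exp (c/6) ≤ Real.exp (c * (E.p k ω - 1/2))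
      apply Real.exp_le_exp.2
      nlinarith
  have htail₁ := E.M_tail hsum c T hε
  have htail₂ := E.M_tail hsum (-c) T hε
  have hkey : Real.exp (c^2 * S / 2) ^ T / Real.exp (c/6) ≤ Real.exp (-(2*L)) := by
    rw [← Real.exp_nat_mul, ← Real.exp_sub]
    apply Real.exp_le_exp.2
    have hST : 0 < S * T := mul_pos hs hTpos
    have e : (T:ℝ) * (c^2 * S / 2) - c/6 = -(1/(72 * (S * T))) := by
      rw [hcdef]; field_simp; ring
    rw [e]
    have h144 : 144 * L * (S * (T:ℝ)) ≤ 1 := by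
      have h0 : (0:ℝ) < 144 * L := by linarith
      have := mul_le_mul_of_nonneg_left hsT h0.le
      calc 144 * L * (S * (T:ℝ)) ≤ 144 * L * (1 / (144 * L)) := this
        _ = 1 := by field_simp
    have h2L : 2 * L ≤ 1 / (72 * (S * T)) := by
      rw [le_div_iff₀ (by linarith : (0:ℝ) < 72 * (S * T))]
      nlinarith
    linarith
  have hnegsq : ((-c):ℝ)^2 = c^2 := by ring
  calc μ {ω | ∃ k ≤ T, E.p k ω ∉ Set.Icc (1/3:ℝ) (2/3)}
      ≤ μ ({ω | Real.exp (c/6) ≤ (Finset.range (T+1)).sup' Finset.nonempty_range_add_one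
            fun k => E.M c k ω} ∪
          {ω | Real.exp (c/6) ≤ (Finset.range (T+1)).sup' Finset.nonempty_range_add_one
            fun k => E.M (-c) k ω}) := measure_mono hincl
    _ ≤ μ {ω | Real.exp (c/6) ≤ (Finset.range (T+1)).sup' Finset.nonempty_range_add_one
            fun k => E.M c k ω}
        + μ {ω | Real.exp (c/6) ≤ (Finset.range (T+1)).sup' Finset.nonempty_range_add_one
            fun k => E.M (-c) k ω} := measure_union_le _ _
    _ ≤ ENNReal.ofReal (Real.exp (c^2 * S / 2) ^ T / Real.exp (c/6))
        + ENNReal.ofReal (Real.exp ((-c)^2 * S / 2) ^ T / Real.exp (c/6)) :=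
        add_le_add htail₁ htail₂
    _ = ENNReal.ofReal (Real.exp (c^2 * S / 2) ^ T / Real.exp (c/6))
        + ENNReal.ofReal (Real.exp (c^2 * S / 2) ^ T / Real.exp (c/6)) := by
        rw [hnegsq]
    _ ≤ ENNReal.ofReal (2 * Real.exp (-(2*L))) := by
        rw [← ENNReal.ofReal_add (by positivity) (by positivity)]
        apply ENNReal.ofReal_le_ofReal
        linarith

end NeutralBitEDA

/-- Let `n ≥ 2` and let `(E i).p` for `i ∈ Fin n` be `n` mutually independent
copies of the neutral-bit frequency process.  With
`T₀ = 1 / (144 * s * log n)` where `s = ∑_{i=1}^lam γ i ^ 2`, with probability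
at least `1 - 2/n` all `n` frequencies stay in `[1/3, 2/3]` during the first
`T₀` iterations. -/
theorem neutral_bit_no_genetic_drift {Ω : Type*} [MeasurableSpace Ω]
    (μ : Measure Ω) [IsProbabilityMeasure μ]
    (lam : ℕ) (hlam : 1 ≤ lam) (γ : ℕ → ℝ)
    (hsum : ∑ i ∈ Finset.range (lam + 1), γ i = 1)
    (hnz : ∃ i ∈ Finset.Icc 1 lam, γ i ≠ 0)
    (n : ℕ) (hn : 2 ≤ n)
    (E : Fin n → NeutralBitEDA μ lam γ)
    (hindep : iIndepFun (m := fun _ : Fin n => (inferInstance : MeasurableSpace (ℕ → ℝ)))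
      (fun (i : Fin n) (ω : Ω) (t : ℕ) => (E i).p t ω) μ) :
    1 - 2 / (n : ℝ≥0∞)
      ≤ μ {ω | ∀ i : Fin n, ∀ t : ℕ,
          (t : ℝ) ≤ 1 / (144 * (∑ i ∈ Finset.Icc 1 lam, γ i ^ 2) * Real.log n) →
          (E i).p t ω ∈ Set.Icc (1 / 3 : ℝ) (2 / 3)} := by
  classical
  set S := ∑ i ∈ Finset.Icc 1 lam, γ i ^ 2 with hSdef
  obtain ⟨j, hj, hjne⟩ := hnz
  have hs : 0 < S :=
    Finset.sum_pos' (fun i _ => sq_nonneg _)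
      ⟨j, hj, by rw [← sq_abs]; exact pow_pos (abs_pos.2 hjne) 2⟩
  have hn1 : (1:ℝ) < n := by exact_mod_cast Nat.lt_of_lt_of_le one_lt_two hn
  have hnpos : (0:ℝ) < n := by linarith
  set L := Real.log n with hLdef
  have hL : 0 < L := Real.log_pos hn1
  set T₀ : ℝ := 1 / (144 * S * L) with hT₀def
  have hT₀pos : 0 < T₀ := div_pos one_pos (mul_pos (mul_pos (by norm_num) hs) hL)
  set T : ℕ := ⌊T₀⌋₊ with hTdef
  set G := {ω : Ω | ∀ i : Fin n, ∀ t : ℕ, (t : ℝ) ≤ T₀ →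
      (E i).p t ω ∈ Set.Icc (1 / 3 : ℝ) (2 / 3)} with hGdef
  have hGm : MeasurableSet G := by
    have hGeq : G = ⋂ (i : Fin n), ⋂ (t : ℕ), ⋂ (_ : (t : ℝ) ≤ T₀),
        (E i).p t ⁻¹' Set.Icc (1/3 : ℝ) (2/3) := by
      ext ω
      simp only [hGdef, Set.mem_setOf_eq, Set.mem_iInter, Set.mem_preimage]
    rw [hGeq]
    exact MeasurableSet.iInter fun i => MeasurableSet.iInter fun t =>
      MeasurableSet.iInter fun _ =>
        ((((E i).adapted t).mono ((E i).F.le t) le_rfl)) measurableSet_Icc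
  set B : Fin n → Set Ω :=
    fun i => {ω | ∃ k ≤ T, (E i).p k ω ∉ Set.Icc (1/3:ℝ) (2/3)} with hBdef
  have hGc : Gᶜ ⊆ ⋃ i, B i := by
    intro ω hω
    simp only [hGdef, Set.mem_compl_iff, Set.mem_setOf_eq, not_forall] at hω
    obtain ⟨i, t, ht, hnot⟩ := hω
    exact Set.mem_iUnion.2 ⟨i, t, Nat.le_floor ht, hnot⟩
  have hBi : ∀ i, μ (B i) ≤ ENNReal.ofReal (2 / (n:ℝ)^2) := by
    intro i
    by_cases hT : 1 ≤ T
    · have hT0 : (T:ℝ) ≤ T₀ := Nat.floor_le hT₀pos.le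
      have hsT : S * T ≤ 1 / (144 * L) := by
        calc S * T ≤ S * T₀ := mul_le_mul_of_nonneg_left hT0 hs.le
          _ = 1 / (144 * L) := by
              rw [hT₀def]
              field_simp
      have h2L : (2:ℝ) / (n:ℝ)^2 = 2 * Real.exp (-(2*L)) := by
        have hexp : Real.exp (-(2*L)) = 1 / (n:ℝ)^2 := by
          rw [Real.exp_neg, show (2:ℝ) * L = ((2:ℕ):ℝ) * L by norm_num,
            Real.exp_nat_mul, hLdef, Real.exp_log hnpos]
          norm_num
        rw [hexp]; ring
      rw [h2L]
      exact (E i).process_bad hsum hL hs hT hsT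
    · have hT0 : T = 0 := Nat.lt_one_iff.1 (not_le.1 hT)
      have hnull : μ (B i) = 0 := by
        have hsub : B i ⊆ {ω | (E i).p 0 ω ∉ Set.Icc (1/3:ℝ) (2/3)} := by
          rintro ω ⟨k, hk, hknot⟩
          rw [hT0, Nat.le_zero] at hk
          rw [hk] at hknot
          exact hknot
        refine measure_mono_null hsub ?_
        have hae : ∀ᵐ ω ∂μ, (E i).p 0 ω ∈ Set.Icc (1/3:ℝ) (2/3) := by
          filter_upwards [(E i).p_zero] with ω h
          rw [h]
          constructor <;> norm_num
        exact hae
      rw [hnull]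
      exact zero_le
  have hGcb : μ Gᶜ ≤ ENNReal.ofReal (2 / (n:ℝ)) := by
    have hn0 : (n:ℝ) ≠ 0 := hnpos.ne'
    calc μ Gᶜ ≤ μ (⋃ i, B i) := measure_mono hGc
      _ ≤ ∑' i, μ (B i) := measure_iUnion_le _
      _ ≤ ∑' _ : Fin n, ENNReal.ofReal (2 / (n:ℝ)^2) := ENNReal.tsum_le_tsum hBi
      _ = n * ENNReal.ofReal (2 / (n:ℝ)^2) := by
          rw [tsum_fintype, Finset.sum_const, Finset.card_univ, Fintype.card_fin, nsmul_eq_mul]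
      _ = ENNReal.ofReal (2 / (n:ℝ)) := by
          rw [← ENNReal.ofReal_natCast n, ← ENNReal.ofReal_mul (Nat.cast_nonneg n)]
          congr 1
          field_simp
  have hfrac : ENNReal.ofReal (2 / (n:ℝ)) = 2 / (n : ℝ≥0∞) := by
    rw [ENNReal.ofReal_div_of_pos hnpos, ENNReal.ofReal_natCast]
    norm_num
  calc 1 - 2 / (n:ℝ≥0∞) = 1 - ENNReal.ofReal (2 / (n:ℝ)) := by rw [hfrac]
    _ ≤ 1 - μ Gᶜ := tsub_le_tsub_left hGcb 1
    _ ≤ μ G := by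
        rw [tsub_le_iff_right]
        have := measure_add_measure_compl (μ := μ) hGm
        rw [measure_univ] at this
        exact this.symm.le
end
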